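/- arXiv:2507.18251 — 2 statements merged into one kernel-verified Lean document; each statement's English description precedes it below -/
import Mathlib

section
/- Let X be an allocation of a personalized bi-valued instance in which every ratio r_i = a_i/b_i is a positive integer. Then X is Pareto-optimal if and only if X admits neither a Type I witness nor a Type II witness. -/
open Finset

/-- Additive utility of a bundle: the sum of the values of the single goods in it. -/
def util {n : ℕ} {M : Type*} [DecidableEq M] (u : Fin n → M → ℝ) (i : Fin n)
    (S : Finset M) : ℝ :=
  ∑ g ∈ S, u i g

/-- `X` is an allocation: a partition of the set `M` of goods into `n` (possibly empty) bundles. -/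
def IsAllocation {n : ℕ} {M : Type*} [DecidableEq M] (X : Fin n → Finset M) : Prop :=
  (∀ g : M, ∃ i, g ∈ X i) ∧ ∀ i j : Fin n, i ≠ j → Disjoint (X i) (X j)

/-- `X` is EFX w.r.t. utilities `u`. -/
def IsEFX {n : ℕ} {M : Type*} [DecidableEq M] (u : Fin n → M → ℝ)
    (X : Fin n → Finset M) : Prop :=
  ∀ i j : Fin n, ∀ g ∈ X j, util u i ((X j).erase g) ≤ util u i (X i)

/-- `X'` Pareto-dominates `X` w.r.t. utilities `u`. -/
def ParetoDominates {n : ℕ} {M : Type*} [DecidableEq M] (u : Fin n → M → ℝ)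
    (X' X : Fin n → Finset M) : Prop :=
  (∀ i, util u i (X i) ≤ util u i (X' i)) ∧ ∃ j, util u j (X j) < util u j (X' j)

/-- `X` is Pareto-optimal: no allocation Pareto-dominates it. -/
def IsParetoOptimal {n : ℕ} {M : Type*} [DecidableEq M] (u : Fin n → M → ℝ)
    (X : Fin n → Finset M) : Prop :=
  ¬ ∃ X' : Fin n → Finset M, IsAllocation X' ∧ ParetoDominates u X' X

/-- The number of goods transferred (i.e. whose owner changes) when moving from
allocation `X` to allocation `X'`. -/
noncomputable def transferCount {n : ℕ} {M : Type*} [DecidableEq M]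
    (X X' : Fin n → Finset M) : ℕ :=
  Set.ncard {g : M | ∃ i, g ∈ X i ∧ g ∉ X' i}

/-- `X'` is a minimal Pareto-improvement of `X`: it is an allocation Pareto-dominating `X`
that minimizes the number of transferred goods among all such allocations. -/
def IsMinimalParetoImprovement {n : ℕ} {M : Type*} [DecidableEq M] (u : Fin n → M → ℝ)
    (X X' : Fin n → Finset M) : Prop :=
  IsAllocation X' ∧ ParetoDominates u X' X ∧
    ∀ X'' : Fin n → Finset M, IsAllocation X'' → ParetoDominates u X'' X →
      transferCount X X' ≤ transferCount X X''

/-- A Type I witness ("small-large exchange cycle") for an allocation `X`, w.r.t. a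
personalized bi-valued profile where agent `i` values large goods at `a i` and small goods
at `b i`.  It consists of distinct agents `ag 0, …, ag (k-1)` (`k ≥ 2`, 0-indexed) and goods
`g 0, …, g (k-1)` with `g t ∈ X (ag t)`, such that `g 0` is small for `ag 0` and large for
`ag 1`, the good `g t` is large for `ag t` and for `ag (t+1)` for `1 ≤ t ≤ k-2`, and it is
not the case that `g (k-1)` is large for `ag (k-1)` and small for `ag 0`. -/
def TypeIWitness {n : ℕ} {M : Type*} [DecidableEq M] (u : Fin n → M → ℝ)
    (a b : Fin n → ℝ) (X : Fin n → Finset M) : Prop :=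
  ∃ (k : ℕ) (ag : ℕ → Fin n) (g : ℕ → M),
    2 ≤ k ∧
    (∀ s, s < k → ∀ t, t < k → s ≠ t → ag s ≠ ag t) ∧
    (∀ t, t < k → g t ∈ X (ag t)) ∧
    u (ag 0) (g 0) = b (ag 0) ∧ u (ag 1) (g 0) = a (ag 1) ∧
    (∀ t, 1 ≤ t → t ≤ k - 2 →
      u (ag t) (g t) = a (ag t) ∧ u (ag (t + 1)) (g t) = a (ag (t + 1))) ∧
    ¬ (u (ag (k - 1)) (g (k - 1)) = a (ag (k - 1)) ∧ u (ag 0) (g (k - 1)) = b (ag 0))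

/-- A Type II witness ("one-to-many exchange cycle") for an allocation `X`, w.r.t. a
personalized bi-valued profile where agent `i` values large goods at `a i` and small goods
at `b i`.  It consists of distinct agents `ag 0, …, ag (k-1)` (`k ≥ 2`, 0-indexed) with
`r (ag 0) = a (ag 0) / b (ag 0)` a positive integer `R` and `r (ag 0) < r (ag (k-1))`,
`R` distinct goods `h 0, …, h (R-1) ∈ X (ag (k-1))` each small for `ag (k-1)` and for
`ag 0`, and goods `g 0, …, g (k-2)` with `g t ∈ X (ag t)` large for `ag t` and for
`ag (t+1)`. -/
def TypeIIWitness {n : ℕ} {M : Type*} [DecidableEq M] (u : Fin n → M → ℝ)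
    (a b : Fin n → ℝ) (X : Fin n → Finset M) : Prop :=
  ∃ (k R : ℕ) (ag : ℕ → Fin n) (h : ℕ → M) (g : ℕ → M),
    2 ≤ k ∧ 0 < R ∧
    (∀ s, s < k → ∀ t, t < k → s ≠ t → ag s ≠ ag t) ∧
    a (ag 0) / b (ag 0) = (R : ℝ) ∧
    a (ag 0) / b (ag 0) < a (ag (k - 1)) / b (ag (k - 1)) ∧
    (∀ j, j < R → ∀ j', j' < R → j ≠ j' → h j ≠ h j') ∧
    (∀ j, j < R →
      h j ∈ X (ag (k - 1)) ∧ u (ag (k - 1)) (h j) = b (ag (k - 1)) ∧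
        u (ag 0) (h j) = b (ag 0)) ∧
    (∀ t, t < k - 1 →
      g t ∈ X (ag t) ∧ u (ag t) (g t) = a (ag t) ∧ u (ag (t + 1)) (g t) = a (ag (t + 1)))

section Aux
set_option linter.unusedSectionVars false

open Finset
variable {n : ℕ} {M : Type*} [Fintype M] [DecidableEq M]

/-- The bundle of a position function. -/
def bundleF (f : M → Fin n) (i : Fin n) : Finset M := Finset.univ.filter (fun g => f g = i)

lemma mem_bundleF {f : M → Fin n} {i : Fin n} {gd : M} : gd ∈ bundleF f i ↔ f gd = i := by
  simp [bundleF]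

lemma isAllocation_bundleF (f : M → Fin n) : IsAllocation (bundleF f) := by
  constructor
  · exact fun gd => ⟨f gd, mem_bundleF.2 rfl⟩
  · intro i j hij
    rw [Finset.disjoint_left]
    intro gd hi hj
    exact hij ((mem_bundleF.1 hi).symm.trans (mem_bundleF.1 hj))

noncomputable def ownerF (X : Fin n → Finset M) (hX : IsAllocation X) : M → Fin n :=
  fun gd => (hX.1 gd).choose

lemma ownerF_mem (X : Fin n → Finset M) (hX : IsAllocation X) (gd : M) :
    gd ∈ X (ownerF X hX gd) := (hX.1 gd).choose_spec

lemma ownerF_eq_iff {X : Fin n → Finset M} {hX : IsAllocation X} {gd : M} {i : Fin n} :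
    ownerF X hX gd = i ↔ gd ∈ X i := by
  constructor
  · rintro rfl; exact ownerF_mem ..
  · intro h
    by_contra hne
    exact (Finset.disjoint_left.1 (hX.2 _ _ hne) (ownerF_mem X hX gd)) h

lemma bundleF_ownerF (X : Fin n → Finset M) (hX : IsAllocation X) (i : Fin n) :
    bundleF (ownerF X hX) i = X i := by
  ext gd; rw [mem_bundleF, ownerF_eq_iff]

def sumIf {β : Type*} [AddCommMonoid β] (v : M → β) (f : M → Fin n) (i : Fin n) : β :=
  ∑ gd, if f gd = i then v gd else 0

lemma util_bundleF (u : Fin n → M → ℝ) (f : M → Fin n) (i : Fin n) :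
    util u i (bundleF f i) = sumIf (u i) f i := by
  rw [util, bundleF, Finset.sum_filter, sumIf]

lemma sumIf_override {β : Type*} [AddCommGroup β] (v : M → β) (φ h : M → Fin n)
    (D : Finset M) (i : Fin n) :
    sumIf v (fun gd => if gd ∈ D then h gd else φ gd) i
      = sumIf v φ i + ∑ gd ∈ D, ((if h gd = i then v gd else 0) - (if φ gd = i then v gd else 0)) := by
  unfold sumIf
  have key : ∀ gd : M, (if (if gd ∈ D then h gd else φ gd) = i then v gd else 0)
      = (if φ gd = i then v gd else 0)
        + (if gd ∈ D then ((if h gd = i then v gd else 0) - (if φ gd = i then v gd else 0)) else 0) := by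
    intro gd; by_cases hgd : gd ∈ D <;> simp [hgd]
  rw [Finset.sum_congr rfl (fun gd _ => key gd), Finset.sum_add_distrib]
  congr 1
  rw [Finset.sum_ite_mem, Finset.univ_inter]

end Aux
section Easy
set_option linter.unusedSectionVars false
set_option maxHeartbeats 1000000

open Finset
variable {n : ℕ} {M : Type*} [Fintype M] [DecidableEq M]

/-- cyclic successor on `Fin k` represented in ℕ -/
def cycS (k t : ℕ) : ℕ := if t + 1 = k then 0 else t + 1
/-- cyclic predecessor -/
def cycP (k t : ℕ) : ℕ := if t = 0 then k - 1 else t - 1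

lemma cycS_lt {k t : ℕ} (hk : 0 < k) (ht : t < k) : cycS k t < k := by
  unfold cycS; split <;> omega
lemma cycP_lt {k t : ℕ} (hk : 0 < k) (ht : t < k) : cycP k t < k := by
  unfold cycP; split <;> omega
lemma cycS_cycP {k t : ℕ} (hk : 0 < k) (ht : t < k) : cycS k (cycP k t) = t := by
  unfold cycS cycP; split_ifs <;> omega
lemma cycS_inj {k t t' : ℕ} (ht : t < k) (ht' : t' < k) (h : cycS k t = cycS k t') : t = t' := by
  unfold cycS at h; split_ifs at h <;> omega

lemma sum_ite_agent {k k₂ : ℕ} {i : Fin n} (ag : ℕ → Fin n)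
    (hdis : ∀ s, s < k₂ → ∀ t, t < k₂ → s ≠ t → ag s ≠ ag t)
    (v : ℕ → ℝ) (τ : ℕ → ℕ) (hτ : ∀ t, t < k → τ t < k₂)
    (hτinj : ∀ t t', t < k → t' < k → τ t = τ t' → t = t')
    (t₀ : ℕ) (ht₀ : t₀ < k₂) (hi : ag t₀ = i)
    (tpre : ℕ) (hpre : tpre < k) (hτpre : τ tpre = t₀) :
    ∑ t ∈ Finset.range k, (if ag (τ t) = i then v t else 0) = v tpre := by
  have hstep : ∑ t ∈ Finset.range k, (if ag (τ t) = i then v t else 0)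
      = (if ag (τ tpre) = i then v tpre else 0) := by
    apply Finset.sum_eq_single_of_mem tpre (Finset.mem_range.2 hpre)
    intro t htm hne
    have ht : t < k := Finset.mem_range.1 htm
    apply if_neg
    intro heq
    have hττ : τ t = t₀ := by
      by_contra hne'
      exact hdis (τ t) (hτ t ht) t₀ ht₀ hne' (heq.trans hi.symm)
    exact hne (hτinj t tpre ht hpre (hττ.trans hτpre.symm))
  rw [hstep, if_pos (by rw [hτpre, hi])]

lemma sum_ite_agent_zero {k : ℕ} {i : Fin n} (ag : ℕ → Fin n)
    (v : ℕ → ℝ) (τ : ℕ → ℕ) (h : ∀ t, t < k → ag (τ t) ≠ i) :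
    ∑ t ∈ Finset.range k, (if ag (τ t) = i then v t else 0) = 0 :=
  Finset.sum_eq_zero fun t ht => if_neg (h t (Finset.mem_range.1 ht))

lemma typeI_improvement {u : Fin n → M → ℝ} {a b : Fin n → ℝ} {X : Fin n → Finset M}
    (hab : ∀ i, b i < a i) (hbi : ∀ i g, u i g = a i ∨ u i g = b i)
    (hX : IsAllocation X) (hW : TypeIWitness u a b X) :
    ∃ X' : Fin n → Finset M, IsAllocation X' ∧ ParetoDominates u X' X := by
  classical
  obtain ⟨k, ag, g, hk2, hdis, hmem, hg0s, hg0l, hmid, hfin⟩ := hW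
  obtain ⟨k', rfl⟩ : ∃ k', k = k' + 2 := ⟨k - 2, by omega⟩
  have hfin' : ¬ (u (ag (k' + 1)) (g (k' + 1)) = a (ag (k' + 1)) ∧
      u (ag 0) (g (k' + 1)) = b (ag 0)) := by
    have h21 : k' + 2 - 1 = k' + 1 := rfl
    rw [h21] at hfin; exact hfin
  have hmid' : ∀ t, 1 ≤ t → t ≤ k' →
      u (ag t) (g t) = a (ag t) ∧ u (ag (t + 1)) (g t) = a (ag (t + 1)) := by
    have h22 : k' + 2 - 2 = k' := rfl
    rw [h22] at hmid; exact hmid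
  set K := k' + 2 with hK
  have hKpos : 0 < K := by omega
  set own := ownerF X hX with hown
  have hown_g : ∀ t, t < K → own (g t) = ag t := fun t ht => ownerF_eq_iff.2 (hmem t ht)
  have hginj : ∀ t, t < K → ∀ t', t' < K → t ≠ t' → g t ≠ g t' := by
    intro t ht t' ht' hne heq
    refine hdis t ht t' ht' hne ?_
    rw [← hown_g t ht, ← hown_g t' ht', heq]
  set idx : M → ℕ := fun gd => sInf {t | t < K ∧ g t = gd} with hidxdef
  have hidx : ∀ t, t < K → idx (g t) = t := by
    intro t ht
    have hmm : idx (g t) ∈ {t' | t' < K ∧ g t' = g t} := Nat.sInf_mem ⟨t, ht, rfl⟩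
    by_contra hne
    exact hginj _ hmm.1 t ht hne hmm.2
  set D : Finset M := (Finset.range K).image g with hD
  set f : M → Fin n := fun gd => if gd ∈ D then ag (cycS K (idx gd)) else own gd with hf
  -- utility difference
  have hdiff : ∀ i : Fin n, util u i (bundleF f i) = util u i (X i) +
      (∑ t ∈ Finset.range K, (if ag (cycS K t) = i then u i (g t) else 0)
        - ∑ t ∈ Finset.range K, (if ag t = i then u i (g t) else 0)) := by
    intro i
    rw [hf, util_bundleF, sumIf_override (u i) own (fun gd => ag (cycS K (idx gd))) D i]
    rw [← util_bundleF, bundleF_ownerF]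
    congr 1
    rw [Finset.sum_image (fun x hx y hy hxy =>
      by
        by_contra hne
        exact hginj x (Finset.mem_range.1 hx) y (Finset.mem_range.1 hy) hne hxy)]
    rw [Finset.sum_sub_distrib]
    congr 1
    · apply Finset.sum_congr rfl
      intro t ht
      rw [hidx t (Finset.mem_range.1 ht)]
    · apply Finset.sum_congr rfl
      intro t ht
      rw [hown_g t (Finset.mem_range.1 ht)]
  -- evaluate the difference
  have hval : ∀ t₀, t₀ < K →
      util u (ag t₀) (bundleF f (ag t₀)) = util u (ag t₀) (X (ag t₀)) +
        (u (ag t₀) (g (cycP K t₀)) - u (ag t₀) (g t₀)) := by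
    intro t₀ ht₀
    rw [hdiff (ag t₀)]
    congr 2
    · exact sum_ite_agent ag hdis _ _ (fun t ht => cycS_lt hKpos ht)
        (fun t t' ht ht' => cycS_inj ht ht') t₀ ht₀ rfl (cycP K t₀) (cycP_lt hKpos ht₀)
        (cycS_cycP hKpos ht₀)
    · exact sum_ite_agent ag hdis _ _ (fun t ht => ht) (fun t t' _ _ h => h) t₀ ht₀ rfl
        t₀ ht₀ rfl
  have hval0 : ∀ i : Fin n, (∀ t, t < K → ag t ≠ i) →
      util u i (bundleF f i) = util u i (X i) := by
    intro i hi
    rw [hdiff i,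
      sum_ite_agent_zero ag _ _ (fun t ht => hi (cycS K t) (cycS_lt hKpos ht)),
      sum_ite_agent_zero ag _ _ (fun t ht => hi t ht)]
    ring
  -- basic value facts
  have b_le_u : ∀ i gd, b i ≤ u i gd := by
    intro i gd; rcases hbi i gd with h | h
    · rw [h]; exact le_of_lt (hab i)
    · rw [h]
  have u_le_a : ∀ i gd, u i gd ≤ a i := by
    intro i gd; rcases hbi i gd with h | h
    · rw [h]
    · rw [h]; exact le_of_lt (hab i)
  -- nonneg gains
  have hge : ∀ i, util u i (X i) ≤ util u i (bundleF f i) := by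
    intro i
    by_cases hex : ∃ t₀, t₀ < K ∧ ag t₀ = i
    · obtain ⟨t₀, ht₀, rfl⟩ := hex
      rw [hval t₀ ht₀]
      have key : u (ag t₀) (g t₀) ≤ u (ag t₀) (g (cycP K t₀)) := by
        rcases Nat.eq_zero_or_pos t₀ with rfl | ht₀pos
        · have : cycP K 0 = k' + 1 := by unfold cycP; simp [hK]
          rw [this, hg0s]
          exact b_le_u (ag 0) (g (k' + 1))
        · by_cases htop : t₀ = k' + 1
          · subst htop
            have hpred : cycP K (k' + 1) = k' := by unfold cycP; split <;> omega
            rw [hpred]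
            have hpk : u (ag (k' + 1)) (g k') = a (ag (k' + 1)) := by
              rcases Nat.eq_zero_or_pos k' with rfl | hk'pos
              · exact hg0l
              · have := (hmid' k' hk'pos (le_refl k')).2
                exact this
            rw [hpk]
            exact u_le_a _ _
          · have htle : t₀ ≤ k' := by omega
            have hpred : cycP K t₀ = t₀ - 1 := by unfold cycP; split <;> omega
            rw [hpred, (hmid' t₀ ht₀pos htle).1]
            have hin : u (ag t₀) (g (t₀ - 1)) = a (ag t₀) := by
              rcases Nat.eq_zero_or_pos (t₀ - 1) with hz | hpos
              · rw [hz]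
                have ht1 : t₀ = 1 := by omega
                rw [ht1]; exact hg0l
              · have := (hmid' (t₀ - 1) hpos (by omega)).2
                rwa [show t₀ - 1 + 1 = t₀ by omega] at this
            rw [hin]
      linarith
    · push_neg at hex
      rw [hval0 i (fun t ht hcon => (hex t ht) hcon)]
  -- strictness
  have hstrict : ∃ j, util u j (X j) < util u j (bundleF f j) := by
    rcases hbi (ag (k' + 1)) (g (k' + 1)) with hA | hB
    · -- last good large for last agent: then it is large for agent 0
      have h0a : u (ag 0) (g (k' + 1)) = a (ag 0) := by
        rcases hbi (ag 0) (g (k' + 1)) with h | h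
        · exact h
        · exact absurd ⟨hA, h⟩ hfin'
      refine ⟨ag 0, ?_⟩
      rw [hval 0 (by omega)]
      have : cycP K 0 = k' + 1 := by unfold cycP; simp [hK]
      rw [this, hg0s, h0a]
      have := hab (ag 0)
      linarith
    · refine ⟨ag (k' + 1), ?_⟩
      rw [hval (k' + 1) (by omega)]
      have hpred : cycP K (k' + 1) = k' := by unfold cycP; split <;> omega
      rw [hpred, hB]
      have hpk : u (ag (k' + 1)) (g k') = a (ag (k' + 1)) := by
        rcases Nat.eq_zero_or_pos k' with rfl | hk'pos
        · exact hg0l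
        · exact (hmid' k' hk'pos (le_refl k')).2
      rw [hpk]
      have := hab (ag (k' + 1))
      linarith
  exact ⟨bundleF f, isAllocation_bundleF f, hge, hstrict⟩

end Easy
section Easy2
set_option linter.unusedSectionVars false
set_option linter.unusedVariables false
set_option maxHeartbeats 1000000

open Finset
variable {n : ℕ} {M : Type*} [Fintype M] [DecidableEq M]

lemma typeII_improvement {u : Fin n → M → ℝ} {a b : Fin n → ℝ} {X : Fin n → Finset M}
    (hab : ∀ i, b i < a i) (hb : ∀ i, 0 < b i)
    (hbi : ∀ i g, u i g = a i ∨ u i g = b i)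
    (hX : IsAllocation X) (hW : TypeIIWitness u a b X) :
    ∃ X' : Fin n → Finset M, IsAllocation X' ∧ ParetoDominates u X' X := by
  classical
  obtain ⟨k, R, ag, hh, g, hk2, hR0, hdis, hrat0, hratlt, hhdis, hhcond, hgcond⟩ := hW
  obtain ⟨k', rfl⟩ : ∃ k', k = k' + 2 := ⟨k - 2, by omega⟩
  have h21 : k' + 2 - 1 = k' + 1 := rfl
  rw [h21] at hratlt hhcond hgcond
  set own := ownerF X hX with hown
  have hown_g : ∀ t, t < k' + 1 → own (g t) = ag t :=
    fun t ht => ownerF_eq_iff.2 (hgcond t ht).1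
  have hown_h : ∀ j, j < R → own (hh j) = ag (k' + 1) :=
    fun j hj => ownerF_eq_iff.2 (hhcond j hj).1
  have hginj : ∀ t, t < k' + 1 → ∀ t', t' < k' + 1 → t ≠ t' → g t ≠ g t' := by
    intro t ht t' ht' hne heq
    refine hdis t (by omega) t' (by omega) hne ?_
    rw [← hown_g t ht, ← hown_g t' ht', heq]
  have hgh : ∀ t, t < k' + 1 → ∀ j, j < R → g t ≠ hh j := by
    intro t ht j hj heq
    have h1 : ag t = ag (k' + 1) := by rw [← hown_g t ht, heq, hown_h j hj]
    exact hdis t (by omega) (k' + 1) (by omega) (by omega) h1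
  set Dg : Finset M := (Finset.range (k' + 1)).image g with hDg
  set Dh : Finset M := (Finset.range R).image hh with hDh
  have hdisj : Disjoint Dg Dh := by
    rw [Finset.disjoint_left]
    rintro gd hgm hhm
    obtain ⟨t, ht, rfl⟩ := Finset.mem_image.1 hgm
    obtain ⟨j, hj, hje⟩ := Finset.mem_image.1 hhm
    exact hgh t (Finset.mem_range.1 ht) j (Finset.mem_range.1 hj) hje.symm
  set idxg : M → ℕ := fun gd => sInf {t | t < k' + 1 ∧ g t = gd} with hidxdef
  have hidx : ∀ t, t < k' + 1 → idxg (g t) = t := by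
    intro t ht
    have hmm : idxg (g t) ∈ {t' | t' < k' + 1 ∧ g t' = g t} := Nat.sInf_mem ⟨t, ht, rfl⟩
    by_contra hne
    exact hginj _ hmm.1 t ht hne hmm.2
  set hfun : M → Fin n := fun gd => if gd ∈ Dg then ag (idxg gd + 1) else ag 0 with hhfun
  set D : Finset M := Dg ∪ Dh with hDdef
  set f : M → Fin n := fun gd => if gd ∈ D then hfun gd else own gd with hf
  have hdiff : ∀ i : Fin n, util u i (bundleF f i) = util u i (X i) +
      ((∑ t ∈ Finset.range (k' + 1), (if ag (t + 1) = i then u i (g t) else 0)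
        - ∑ t ∈ Finset.range (k' + 1), (if ag t = i then u i (g t) else 0))
      + ((if ag 0 = i then ∑ j ∈ Finset.range R, u i (hh j) else 0)
        - (if ag (k' + 1) = i then ∑ j ∈ Finset.range R, u i (hh j) else 0))) := by
    intro i
    rw [hf, util_bundleF, sumIf_override (u i) own hfun D i]
    rw [← util_bundleF, bundleF_ownerF]
    congr 1
    rw [hDdef, Finset.sum_union hdisj]
    congr 1
    · rw [hDg, Finset.sum_image (fun x hx y hy hxy => by
          by_contra hne
          exact hginj x (Finset.mem_range.1 hx) y (Finset.mem_range.1 hy) hne hxy)]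
      rw [Finset.sum_sub_distrib]
      congr 1
      · apply Finset.sum_congr rfl
        intro t ht
        have htt := Finset.mem_range.1 ht
        have hmemg : g t ∈ Dg := by
          rw [hDg]; exact Finset.mem_image.2 ⟨t, ht, rfl⟩
        have hfg : hfun (g t) = ag (t + 1) := by
          rw [hhfun]
          simp only [hmemg, if_true, if_pos]
          rw [hidx t htt]
        rw [hfg]
      · apply Finset.sum_congr rfl
        intro t ht
        rw [hown_g t (Finset.mem_range.1 ht)]
    · rw [hDh, Finset.sum_image (fun x hx y hy hxy => by
          by_contra hne
          exact hhdis x (Finset.mem_range.1 hx) y (Finset.mem_range.1 hy) hne hxy)]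
      rw [Finset.sum_sub_distrib]
      congr 1
      · have hrw : ∀ j ∈ Finset.range R,
            (if hfun (hh j) = i then u i (hh j) else 0) = (if ag 0 = i then u i (hh j) else 0) := by
          intro j hj
          have hnin : hh j ∉ Dg := fun hmem =>
            (Finset.disjoint_left.1 hdisj hmem)
              (by rw [hDh]; exact Finset.mem_image.2 ⟨j, hj, rfl⟩)
          have : hfun (hh j) = ag 0 := by rw [hhfun]; exact if_neg hnin
          rw [this]
        rw [Finset.sum_congr rfl hrw]
        by_cases hag : ag 0 = i
        · simp [hag]
        · simp [hag]
      · have hrw : ∀ j ∈ Finset.range R,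
            (if own (hh j) = i then u i (hh j) else 0)
              = (if ag (k' + 1) = i then u i (hh j) else 0) := by
          intro j hj
          rw [hown_h j (Finset.mem_range.1 hj)]
        rw [Finset.sum_congr rfl hrw]
        by_cases hag : ag (k' + 1) = i
        · simp [hag]
        · simp [hag]
  -- value facts
  have hb0R : a (ag 0) = (R : ℝ) * b (ag 0) := by
    have hbne : b (ag 0) ≠ 0 := ne_of_gt (hb _)
    field_simp at hrat0
    linarith [hrat0]
  have hsum_h0 : ∑ j ∈ Finset.range R, u (ag 0) (hh j) = (R : ℝ) * b (ag 0) := by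
    rw [Finset.sum_congr rfl (fun j hj => (hhcond j (Finset.mem_range.1 hj)).2.2)]
    rw [Finset.sum_const, Finset.card_range, nsmul_eq_mul]
  have hsum_hK : ∑ j ∈ Finset.range R, u (ag (k' + 1)) (hh j) = (R : ℝ) * b (ag (k' + 1)) := by
    rw [Finset.sum_congr rfl (fun j hj => (hhcond j (Finset.mem_range.1 hj)).2.1)]
    rw [Finset.sum_const, Finset.card_range, nsmul_eq_mul]
  have hKgain : (R : ℝ) * b (ag (k' + 1)) < a (ag (k' + 1)) := by
    rw [hrat0] at hratlt
    exact (lt_div_iff₀ (hb _)).1 hratlt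
  -- evaluation per agent
  have hval : ∀ i : Fin n,
      util u i (X i) ≤ util u i (bundleF f i) ∧
      (i = ag (k' + 1) → util u i (X i) < util u i (bundleF f i)) := by
    intro i
    by_cases hex : ∃ t₀, t₀ < k' + 2 ∧ ag t₀ = i
    · obtain ⟨t₀, ht₀, rfl⟩ := hex
      rcases Nat.eq_zero_or_pos t₀ with rfl | ht₀pos
      · -- agent 0
        have hin : ∑ t ∈ Finset.range (k' + 1), (if ag (t + 1) = ag 0 then u (ag 0) (g t) else 0) = 0 :=
          sum_ite_agent_zero ag _ _ (fun t ht =>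
            hdis (t + 1) (by omega) 0 (by omega) (by omega))
        have hout : ∑ t ∈ Finset.range (k' + 1), (if ag t = ag 0 then u (ag 0) (g t) else 0)
            = u (ag 0) (g 0) :=
          sum_ite_agent (k := k' + 1) (k₂ := k' + 2) ag hdis _ id (fun t ht => by show t < k' + 2; omega)
            (fun t t' _ _ h => h) 0 (by omega) rfl 0 (by omega) rfl
        have hga : u (ag 0) (g 0) = a (ag 0) := (hgcond 0 (by omega)).2.1
        have hite1 : (if ag 0 = ag 0 then ∑ j ∈ Finset.range R, u (ag 0) (hh j) else 0)
            = (R : ℝ) * b (ag 0) := by rw [if_pos rfl, hsum_h0]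
        have hite2 : (if ag (k' + 1) = ag 0 then ∑ j ∈ Finset.range R, u (ag 0) (hh j) else 0)
            = 0 := if_neg (hdis (k' + 1) (by omega) 0 (by omega) (by omega))
        rw [hdiff (ag 0), hin, hout, hga, hite1, hite2]
        constructor
        · rw [hb0R]; apply le_of_eq; ring
        · intro hcon
          exact absurd hcon.symm (hdis (k' + 1) (by omega) 0 (by omega) (by omega))
      · by_cases htop : t₀ = k' + 1
        · -- last agent
          subst htop
          have hin : ∑ t ∈ Finset.range (k' + 1),
              (if ag (t + 1) = ag (k' + 1) then u (ag (k' + 1)) (g t) else 0)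
              = u (ag (k' + 1)) (g k') :=
            sum_ite_agent (k := k' + 1) (k₂ := k' + 2) ag hdis _ (· + 1)
              (fun t ht => by show t + 1 < k' + 2; omega)
              (fun t t' _ _ h => Nat.succ_injective h) (k' + 1) (by omega) rfl k' (by omega)
              (by show k' + 1 = k' + 1; rfl)
          have hout : ∑ t ∈ Finset.range (k' + 1),
              (if ag t = ag (k' + 1) then u (ag (k' + 1)) (g t) else 0) = 0 :=
            sum_ite_agent_zero ag _ _ (fun t ht =>
              hdis t (by omega) (k' + 1) (by omega) (by omega))
          have hga : u (ag (k' + 1)) (g k') = a (ag (k' + 1)) := (hgcond k' (by omega)).2.2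
          have hite1 : (if ag 0 = ag (k' + 1) then ∑ j ∈ Finset.range R, u (ag (k' + 1)) (hh j) else 0)
              = 0 := if_neg (hdis 0 (by omega) (k' + 1) (by omega) (by omega))
          have hite2 : (if ag (k' + 1) = ag (k' + 1)
              then ∑ j ∈ Finset.range R, u (ag (k' + 1)) (hh j) else 0)
              = (R : ℝ) * b (ag (k' + 1)) := by rw [if_pos rfl, hsum_hK]
          rw [hdiff (ag (k' + 1)), hin, hout, hga, hite1, hite2]
          constructor
          · linarith
          · intro _; linarith
        · -- middle agent
          have htle : t₀ ≤ k' := by omega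
          have hin : ∑ t ∈ Finset.range (k' + 1),
              (if ag (t + 1) = ag t₀ then u (ag t₀) (g t) else 0)
              = u (ag t₀) (g (t₀ - 1)) :=
            sum_ite_agent (k := k' + 1) (k₂ := k' + 2) ag hdis _ (· + 1)
              (fun t ht => by show t + 1 < k' + 2; omega)
              (fun t t' _ _ h => Nat.succ_injective h) t₀ (by omega) rfl (t₀ - 1) (by omega)
              (by show t₀ - 1 + 1 = t₀; omega)
          have hout : ∑ t ∈ Finset.range (k' + 1),
              (if ag t = ag t₀ then u (ag t₀) (g t) else 0) = u (ag t₀) (g t₀) :=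
            sum_ite_agent (k := k' + 1) (k₂ := k' + 2) ag hdis _ id
              (fun t ht => by show t < k' + 2; omega)
              (fun t t' _ _ h => h) t₀ (by omega) rfl t₀ (by omega) rfl
          have hga1 : u (ag t₀) (g (t₀ - 1)) = a (ag t₀) := by
            have := (hgcond (t₀ - 1) (by omega)).2.2
            rwa [show t₀ - 1 + 1 = t₀ by omega] at this
          have hga2 : u (ag t₀) (g t₀) = a (ag t₀) := (hgcond t₀ (by omega)).2.1
          have hite1 : (if ag 0 = ag t₀ then ∑ j ∈ Finset.range R, u (ag t₀) (hh j) else 0) = 0 :=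
            if_neg (hdis 0 (by omega) t₀ (by omega) (by omega))
          have hite2 : (if ag (k' + 1) = ag t₀ then ∑ j ∈ Finset.range R, u (ag t₀) (hh j) else 0)
              = 0 := if_neg (hdis (k' + 1) (by omega) t₀ (by omega) (by omega))
          rw [hdiff (ag t₀), hin, hout, hga1, hga2, hite1, hite2]
          constructor
          · apply le_of_eq; ring
          · intro hcon
            exact absurd hcon.symm (hdis (k' + 1) (by omega) t₀ (by omega) (by omega))
    · push_neg at hex
      have hin : (∑ t ∈ Finset.range (k' + 1), if ag (t + 1) = i then u i (g t) else 0) = 0 :=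
        sum_ite_agent_zero ag _ _ (fun t ht => hex (t + 1) (by omega))
      have hout : (∑ t ∈ Finset.range (k' + 1), if ag t = i then u i (g t) else 0) = 0 :=
        sum_ite_agent_zero ag _ _ (fun t ht => hex t (by omega))
      have hite1 : (if ag 0 = i then ∑ j ∈ Finset.range R, u i (hh j) else 0) = 0 :=
        if_neg (hex 0 (by omega))
      have hite2 : (if ag (k' + 1) = i then ∑ j ∈ Finset.range R, u i (hh j) else 0) = 0 :=
        if_neg (hex (k' + 1) (by omega))
      rw [hdiff i, hin, hout, hite1, hite2]
      constructor
      · apply le_of_eq; ring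
      · intro hcon
        exact absurd rfl (hcon ▸ hex (k' + 1) (by omega))
  refine ⟨bundleF f, isAllocation_bundleF f, fun i => (hval i).1, ⟨ag (k' + 1), (hval _).2 rfl⟩⟩

end Easy2
section Hard
set_option linter.unusedSectionVars false
set_option linter.unusedVariables false
set_option maxHeartbeats 1000000

open Finset
variable {n : ℕ} {M : Type*} [Fintype M] [DecidableEq M]

/-- integer weight of a good for an agent -/
noncomputable def wgtF (u : Fin n → M → ℝ) (a : Fin n → ℝ) (R : Fin n → ℕ)
    (i : Fin n) (gd : M) : ℤ :=
  if u i gd = a i then (R i : ℤ) else 1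

/-- integer utility of the bundle of `f` at agent `i` -/
noncomputable def Wf (u : Fin n → M → ℝ) (a : Fin n → ℝ) (R : Fin n → ℕ)
    (f : M → Fin n) (i : Fin n) : ℤ :=
  sumIf (fun gd => wgtF u a R i gd) f i

/-- the set of transferred goods -/
def TT (own own' : M → Fin n) : Finset M :=
  Finset.univ.filter fun gd => own gd ≠ own' gd

def insF (own own' : M → Fin n) (i : Fin n) : Finset M :=
  (TT own own').filter fun gd => own' gd = i

def outsF (own own' : M → Fin n) (i : Fin n) : Finset M :=
  (TT own own').filter fun gd => own gd = i

noncomputable def deltaF (u : Fin n → M → ℝ) (a : Fin n → ℝ) (R : Fin n → ℕ)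
    (own own' : M → Fin n) (i : Fin n) : ℤ :=
  Wf u a R own' i - Wf u a R own i

/-- All the hypotheses of the hard direction, after fixing a minimal improvement. -/
structure HSetup (u : Fin n → M → ℝ) (a b : Fin n → ℝ) (R : Fin n → ℕ)
    (own own' : M → Fin n) : Prop where
  hab : ∀ i, b i < a i
  hb : ∀ i, 0 < b i
  hbi : ∀ i gd, u i gd = a i ∨ u i gd = b i
  haR : ∀ i, a i = (R i : ℝ) * b i
  hR2 : ∀ i, 2 ≤ R i
  hdomge : ∀ i, Wf u a R own i ≤ Wf u a R own' i
  hdomstrict : ∃ j, Wf u a R own j < Wf u a R own' j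
  hmin : ∀ ψ : M → Fin n, (∀ i, Wf u a R own i ≤ Wf u a R ψ i) →
      (∃ j, Wf u a R own j < Wf u a R ψ j) →
      {gd | own gd ≠ own' gd}.ncard ≤ {gd | own gd ≠ ψ gd}.ncard
  hNoI : ¬ TypeIWitness u a b (bundleF own)
  hNoII : ¬ TypeIIWitness u a b (bundleF own)

variable {u : Fin n → M → ℝ} {a b : Fin n → ℝ} {R : Fin n → ℕ} {own own' : M → Fin n}

lemma HSetup.wgt_pos (S : HSetup u a b R own own') (i : Fin n) (gd : M) :
    0 < wgtF u a R i gd := by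
  unfold wgtF; split
  · have := S.hR2 i; positivity
  · norm_num

lemma HSetup.wgt_le (S : HSetup u a b R own own') (i : Fin n) (gd : M) :
    wgtF u a R i gd ≤ (R i : ℤ) := by
  unfold wgtF; split
  · exact le_refl _
  · have := S.hR2 i; omega

lemma wgt_of_large {i : Fin n} {gd : M} (h : u i gd = a i) :
    wgtF u a R i gd = (R i : ℤ) := if_pos h

lemma wgt_of_small {i : Fin n} {gd : M} (h : ¬ u i gd = a i) :
    wgtF u a R i gd = 1 := if_neg h

lemma HSetup.small_iff (S : HSetup u a b R own own') {i : Fin n} {gd : M} :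
    u i gd = b i ↔ ¬ u i gd = a i := by
  constructor
  · intro h hcon
    rw [h] at hcon
    exact absurd hcon (ne_of_lt (S.hab i))
  · intro h
    rcases S.hbi i gd with h' | h'
    · exact absurd h' h
    · exact h'

lemma mem_TT {gd : M} : gd ∈ TT own own' ↔ own gd ≠ own' gd := by simp [TT]

lemma mem_insF {gd : M} {i : Fin n} :
    gd ∈ insF own own' i ↔ (own gd ≠ own' gd ∧ own' gd = i) := by
  simp [insF, TT]

lemma mem_outsF {gd : M} {i : Fin n} :
    gd ∈ outsF own own' i ↔ (own gd ≠ own' gd ∧ own gd = i) := by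
  simp [outsF, TT]

lemma Wf_override (D : Finset M) (h φ : M → Fin n) (i : Fin n) :
    Wf u a R (fun gd => if gd ∈ D then h gd else φ gd) i
      = Wf u a R φ i + ∑ gd ∈ D, ((if h gd = i then wgtF u a R i gd else 0)
          - (if φ gd = i then wgtF u a R i gd else 0)) := by
  unfold Wf
  exact sumIf_override _ φ h D i

lemma HSetup.delta_nonneg (S : HSetup u a b R own own') (i : Fin n) :
    0 ≤ deltaF u a R own own' i :=
  sub_nonneg.2 (S.hdomge i)

lemma HSetup.move_absurd (S : HSetup u a b R own own') (f : M → Fin n)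
    (hge : ∀ i, Wf u a R own i ≤ Wf u a R f i)
    (hst : ∃ j, Wf u a R own j < Wf u a R f j)
    (hsub : {gd | own gd ≠ f gd} ⊂ {gd | own gd ≠ own' gd}) : False := by
  have h1 := S.hmin f hge hst
  have h2 : {gd | own gd ≠ f gd}.ncard < {gd | own gd ≠ own' gd}.ncard :=
    Set.ncard_lt_ncard hsub (Set.toFinite _)
  omega

lemma HSetup.delta_decomp (S : HSetup u a b R own own') (i : Fin n) :
    deltaF u a R own own' i
      = ∑ gd ∈ insF own own' i, wgtF u a R i gd
        - ∑ gd ∈ outsF own own' i, wgtF u a R i gd := by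
  unfold deltaF Wf sumIf insF outsF
  rw [Finset.sum_filter, Finset.sum_filter, ← Finset.sum_sub_distrib]
  rw [← Finset.sum_sub_distrib]
  rw [← Finset.sum_subset (Finset.subset_univ (TT own own'))]
  intro gd _ hgd
  rw [mem_TT, not_not] at hgd
  rw [hgd]
  ring

lemma HSetup.needed (S : HSetup u a b R own own') {gd : M} (hgd : gd ∈ TT own own') :
    deltaF u a R own own' (own' gd) < wgtF u a R (own' gd) gd := by
  by_contra hcon
  push_neg at hcon
  have hne : own gd ≠ own' gd := mem_TT.1 hgd
  set f : M → Fin n := fun x => if x ∈ ({gd} : Finset M) then own gd else own' x with hf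
  have hWf : ∀ i, Wf u a R f i = Wf u a R own' i
      + ((if own gd = i then wgtF u a R i gd else 0)
          - (if own' gd = i then wgtF u a R i gd else 0)) := by
    intro i
    rw [hf, Wf_override, Finset.sum_singleton]
  have hge : ∀ i, Wf u a R own i ≤ Wf u a R f i := by
    intro i
    rw [hWf i]
    by_cases h1 : own gd = i
    · subst h1
      rw [if_pos rfl, if_neg (fun hcc => hne hcc.symm)]
      have := S.hdomge (own gd)
      have := S.wgt_pos (own gd) gd
      omega
    · by_cases h2 : own' gd = i
      · subst h2
        rw [if_neg h1, if_pos rfl]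
        have hd := hcon
        unfold deltaF at hd
        omega
      · rw [if_neg h1, if_neg h2]
        have := S.hdomge i
        omega
  have hst : ∃ j, Wf u a R own j < Wf u a R f j := by
    refine ⟨own gd, ?_⟩
    rw [hWf (own gd), if_pos rfl, if_neg (fun hcc => hne hcc.symm)]
    have := S.hdomge (own gd)
    have := S.wgt_pos (own gd) gd
    omega
  apply S.move_absurd f hge hst
  rw [Set.ssubset_def]
  constructor
  · intro x hx
    simp only [Set.mem_setOf_eq] at hx ⊢
    by_cases hxg : x = gd
    · subst hxg
      rw [hf] at hx
      simp at hx
    · rw [hf] at hx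
      simp only [Finset.mem_singleton, hxg, if_false] at hx
      exact hx
  · intro hcc
    have := hcc (show gd ∈ {gd_1 | own gd_1 ≠ own' gd_1} from hne)
    simp only [Set.mem_setOf_eq, hf, Finset.mem_singleton, if_pos rfl] at this
    exact this rfl

end Hard
section Hard2
set_option linter.unusedSectionVars false
set_option linter.unusedVariables false
set_option maxHeartbeats 1000000

open Finset
variable {n : ℕ} {M : Type*} [Fintype M] [DecidableEq M]
variable {u : Fin n → M → ℝ} {a b : Fin n → ℝ} {R : Fin n → ℕ} {own own' : M → Fin n}

lemma HSetup.receiver_sender (S : HSetup u a b R own own') {gd : M}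
    (hgd : gd ∈ TT own own') : (outsF own own' (own' gd)).Nonempty := by
  by_contra hcon
  rw [Finset.not_nonempty_iff_eq_empty] at hcon
  have hd := S.delta_decomp (own' gd)
  rw [hcon, Finset.sum_empty] at hd
  have hmem : gd ∈ insF own own' (own' gd) := mem_insF.2 ⟨mem_TT.1 hgd, rfl⟩
  have hle : wgtF u a R (own' gd) gd ≤ ∑ x ∈ insF own own' (own' gd), wgtF u a R (own' gd) x :=
    Finset.single_le_sum (fun x _ => le_of_lt (S.wgt_pos (own' gd) x)) hmem
  have := S.needed hgd
  omega

lemma HSetup.sender_receiver (S : HSetup u a b R own own') {gd : M}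
    (hgd : gd ∈ TT own own') : (insF own own' (own gd)).Nonempty := by
  by_contra hcon
  rw [Finset.not_nonempty_iff_eq_empty] at hcon
  have hd := S.delta_decomp (own gd)
  rw [hcon, Finset.sum_empty] at hd
  have hmem : gd ∈ outsF own own' (own gd) := mem_outsF.2 ⟨mem_TT.1 hgd, rfl⟩
  have hle : wgtF u a R (own gd) gd ≤ ∑ x ∈ outsF own own' (own gd), wgtF u a R (own gd) x :=
    Finset.single_le_sum (fun x _ => le_of_lt (S.wgt_pos (own gd) x)) hmem
  have h1 := S.delta_nonneg (own gd)
  have h2 := S.wgt_pos (own gd) gd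
  omega

lemma HSetup.noswap (S : HSetup u a b R own own') {gI gO : M}
    (hI : gI ∈ TT own own') (hO : gO ∈ TT own own') (hj : own' gI = own gO) :
    ¬ (wgtF u a R (own gO) gI ≤ wgtF u a R (own gO) gO ∧
        wgtF u a R (own' gO) gO ≤ wgtF u a R (own' gO) gI) := by
  rintro ⟨h1, h2⟩
  have hneO : own gO ≠ own' gO := mem_TT.1 hO
  have hneI : own gI ≠ own' gI := mem_TT.1 hI
  have hIO : gI ≠ gO := by
    intro hcc
    rw [hcc] at hj
    exact hneO hj.symm
  set f : M → Fin n := fun x => if x ∈ ({gI, gO} : Finset M)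
      then (if x = gI then own' gO else own gO) else own' x with hf
  have hWf : ∀ i, Wf u a R f i = Wf u a R own' i
      + (((if own' gO = i then wgtF u a R i gI else 0)
          - (if own gO = i then wgtF u a R i gI else 0))
        + ((if own gO = i then wgtF u a R i gO else 0)
          - (if own' gO = i then wgtF u a R i gO else 0))) := by
    intro i
    rw [hf, Wf_override, Finset.sum_pair hIO]
    congr 2
    · rw [if_pos rfl, hj]
    · rw [if_neg hIO.symm]
  have hchange : ∀ i, Wf u a R own' i ≤ Wf u a R f i := by
    intro i
    rw [hWf i]
    by_cases hc1 : own gO = i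
    · have hc2 : ¬ own' gO = i := fun hcc => hneO (hc1.trans hcc.symm)
      rw [if_pos hc1, if_pos hc1, if_neg hc2, if_neg hc2]
      rw [hc1] at h1
      omega
    · by_cases hc2 : own' gO = i
      · rw [if_pos hc2, if_pos hc2, if_neg hc1, if_neg hc1]
        rw [hc2] at h2
        omega
      · rw [if_neg hc1, if_neg hc1, if_neg hc2, if_neg hc2]
        omega
  have hge : ∀ i, Wf u a R own i ≤ Wf u a R f i :=
    fun i => le_trans (S.hdomge i) (hchange i)
  have hst : ∃ j, Wf u a R own j < Wf u a R f j := by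
    obtain ⟨j, hjs⟩ := S.hdomstrict
    exact ⟨j, lt_of_lt_of_le hjs (hchange j)⟩
  apply S.move_absurd f hge hst
  rw [Set.ssubset_def]
  constructor
  · intro x hx
    simp only [Set.mem_setOf_eq] at hx ⊢
    by_cases hxI : x = gI
    · subst hxI
      exact hneI
    · by_cases hxO : x = gO
      · subst hxO
        rw [hf] at hx
        simp only [Finset.mem_insert, Finset.mem_singleton, hxI, or_true, if_true,
          if_neg hxI] at hx
        exact absurd rfl hx
      · rw [hf] at hx
        simp only [Finset.mem_insert, Finset.mem_singleton, hxI, hxO, or_self,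
          if_false] at hx
        exact hx
  · intro hcc
    have hmm := hcc (show gO ∈ {x | own x ≠ own' x} from hneO)
    have hfgO : f gO = own gO := by
      simp only [hf]
      rw [if_pos (by simp : gO ∈ ({gI, gO} : Finset M)), if_neg (fun h => hIO h.symm)]
    simp only [Set.mem_setOf_eq] at hmm
    exact hmm hfgO.symm

/-- no transferred good is large for its source but small for its sink -/
lemma HSetup.noLS (S : HSetup u a b R own own') {gd : M} (hgd : gd ∈ TT own own')
    (hs : ¬ u (own' gd) gd = a (own' gd)) : ¬ u (own gd) gd = a (own gd) := by
  intro hL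
  obtain ⟨gI, hgI⟩ := S.sender_receiver hgd
  rw [mem_insF] at hgI
  have hIT : gI ∈ TT own own' := mem_TT.2 hgI.1
  have := S.noswap hIT hgd hgI.2
  push_neg at this
  have hw1 : wgtF u a R (own gd) gd = (R (own gd) : ℤ) := wgt_of_large hL
  have hw2 : wgtF u a R (own' gd) gd = 1 := wgt_of_small hs
  have hw3 := S.wgt_pos (own' gd) gI
  have hw4 := S.wgt_le (own gd) gI
  omega

/-- an agent cannot both receive a small (for itself) good and send a good small
for (its source = this agent); i.e. small-in excludes small-out -/
lemma HSetup.no_smallin_smallout (S : HSetup u a b R own own') {i : Fin n} {gIn gOut : M}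
    (hIn : gIn ∈ insF own own' i) (hsIn : ¬ u i gIn = a i)
    (hOut : gOut ∈ outsF own own' i)
    (hsOut' : ¬ u (own' gOut) gOut = a (own' gOut)) : False := by
  rw [mem_insF] at hIn
  rw [mem_outsF] at hOut
  have hIT : gIn ∈ TT own own' := mem_TT.2 hIn.1
  have hOT : gOut ∈ TT own own' := mem_TT.2 hOut.1
  apply S.noswap hIT hOT (hIn.2.trans hOut.2.symm)
  constructor
  · rw [hOut.2]
    have hw1 : wgtF u a R i gIn = 1 := wgt_of_small hsIn
    have hw3 := S.wgt_pos i gOut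
    omega
  · have hw3 : wgtF u a R (own' gOut) gOut = 1 := wgt_of_small hsOut'
    have hw4 := S.wgt_pos (own' gOut) gIn
    omega

lemma HSetup.smallin_delta0 (S : HSetup u a b R own own') {i : Fin n} {gd : M}
    (hIn : gd ∈ insF own own' i) (hs : ¬ u i gd = a i) :
    deltaF u a R own own' i = 0 := by
  rw [mem_insF] at hIn
  have hT : gd ∈ TT own own' := mem_TT.2 hIn.1
  have h1 := S.needed hT
  rw [hIn.2] at h1
  have h2 : wgtF u a R i gd = 1 := wgt_of_small hs
  have h3 := S.delta_nonneg i
  omega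

end Hard2
section Hard3
set_option linter.unusedSectionVars false
set_option linter.unusedVariables false
set_option maxHeartbeats 1000000

open Finset
variable {n : ℕ} {M : Type*} [Fintype M] [DecidableEq M]
variable {u : Fin n → M → ℝ} {a b : Fin n → ℝ} {R : Fin n → ℕ} {own own' : M → Fin n}

lemma sum_ite_eqZ {k : ℕ} {i : Fin n} (cc : ℕ → Fin n) (v : ℕ → ℤ) (τ : ℕ → ℕ)
    (t₀ : ℕ) (hpre : t₀ < k) (hτt₀ : cc (τ t₀) = i)
    (huniq : ∀ t, t < k → cc (τ t) = i → t = t₀) :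
    ∑ t ∈ Finset.range k, (if cc (τ t) = i then v t else 0) = v t₀ := by
  have hstep : ∑ t ∈ Finset.range k, (if cc (τ t) = i then v t else 0)
      = (if cc (τ t₀) = i then v t₀ else 0) := by
    apply Finset.sum_eq_single_of_mem t₀ (Finset.mem_range.2 hpre)
    intro t htm hne
    exact if_neg (fun h => hne (huniq t (Finset.mem_range.1 htm) h))
  rw [hstep, if_pos hτt₀]

lemma sum_ite_eqZ_zero {k : ℕ} {i : Fin n} (cc : ℕ → Fin n) (v : ℕ → ℤ) (τ : ℕ → ℕ)
    (h : ∀ t, t < k → cc (τ t) ≠ i) :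
    ∑ t ∈ Finset.range k, (if cc (τ t) = i then v t else 0) = 0 :=
  Finset.sum_eq_zero fun t ht => if_neg (h t (Finset.mem_range.1 ht))

/-- A cycle of transferred goods, each large for both its source and its sink,
cannot exist in a minimal improvement. -/
lemma HSetup.noLLcycle (S : HSetup u a b R own own') (L : ℕ) (hL : 2 ≤ L)
    (cc : ℕ → Fin n) (pp : ℕ → M)
    (hinj : ∀ s, s < L → ∀ t, t < L → s ≠ t → cc s ≠ cc t)
    (hedge : ∀ t, t < L → pp t ∈ TT own own' ∧ own (pp t) = cc t
      ∧ own' (pp t) = cc ((t + 1) % L)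
      ∧ u (cc t) (pp t) = a (cc t) ∧ u (cc ((t + 1) % L)) (pp t) = a (cc ((t + 1) % L))) :
    False := by
  have hLpos : 0 < L := by omega
  have hppinj : ∀ s ∈ Finset.range L, ∀ t ∈ Finset.range L, pp s = pp t → s = t := by
    intro s hs t ht hst
    by_contra hne
    apply hinj s (Finset.mem_range.1 hs) t (Finset.mem_range.1 ht) hne
    rw [← (hedge s (Finset.mem_range.1 hs)).2.1, ← (hedge t (Finset.mem_range.1 ht)).2.1, hst]
  set D : Finset M := (Finset.range L).image pp with hD
  set f : M → Fin n := fun x => if x ∈ D then own x else own' x with hf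
  have hWf : ∀ i, Wf u a R f i = Wf u a R own' i := by
    intro i
    rw [hf, Wf_override, Finset.sum_image hppinj]
    have hsplit : ∀ t ∈ Finset.range L,
        ((if own (pp t) = i then wgtF u a R i (pp t) else 0)
          - (if own' (pp t) = i then wgtF u a R i (pp t) else 0))
        = ((if cc t = i then wgtF u a R i (pp t) else 0)
          - (if cc ((t + 1) % L) = i then wgtF u a R i (pp t) else 0)) := by
      intro t ht
      rw [(hedge t (Finset.mem_range.1 ht)).2.1, (hedge t (Finset.mem_range.1 ht)).2.2.1]
    rw [Finset.sum_congr rfl hsplit, Finset.sum_sub_distrib]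
    by_cases hex : ∃ t₀, t₀ < L ∧ cc t₀ = i
    · obtain ⟨t₀, ht₀, hcc₀⟩ := hex
      set tp := (t₀ + (L - 1)) % L with htp
      have htplt : tp < L := Nat.mod_lt _ hLpos
      have htpsucc : (tp + 1) % L = t₀ := by
        rw [htp, Nat.mod_add_mod, show t₀ + (L - 1) + 1 = t₀ + L by omega,
          Nat.add_mod_right, Nat.mod_eq_of_lt ht₀]
      have huniq2 : ∀ t, t < L → (t + 1) % L = t₀ → t = tp := by
        intro t ht h
        rcases Nat.lt_or_ge (t + 1) L with hlt | hge
        · rw [Nat.mod_eq_of_lt hlt] at h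
          rw [htp, ← h, show t + 1 + (L - 1) = t + L by omega, Nat.add_mod_right,
            Nat.mod_eq_of_lt ht]
        · have hteq : t + 1 = L := by omega
          rw [hteq, Nat.mod_self] at h
          rw [htp, ← h, Nat.zero_add, Nat.mod_eq_of_lt (by omega : L - 1 < L)]
          omega
      have hs1 : ∑ t ∈ Finset.range L, (if cc t = i then wgtF u a R i (pp t) else 0)
          = wgtF u a R i (pp t₀) :=
        sum_ite_eqZ cc _ (fun t => t) t₀ ht₀ hcc₀ (fun t ht h => by
          by_contra hne
          exact hinj t ht t₀ ht₀ hne (h.trans hcc₀.symm))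
      have hs2 : ∑ t ∈ Finset.range L, (if cc ((t + 1) % L) = i then wgtF u a R i (pp t) else 0)
          = wgtF u a R i (pp tp) :=
        sum_ite_eqZ cc _ (fun t => (t + 1) % L) tp htplt
          (by show cc ((tp + 1) % L) = i; rw [htpsucc]; exact hcc₀)
          (fun t ht h => by
            have hmem : (t + 1) % L = t₀ := by
              by_contra hne
              exact hinj _ (Nat.mod_lt _ hLpos) t₀ ht₀ hne (h.trans hcc₀.symm)
            exact huniq2 t ht hmem)
      have hw1 : wgtF u a R i (pp t₀) = (R i : ℤ) :=
        wgt_of_large (hcc₀ ▸ (hedge t₀ ht₀).2.2.2.1)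
      have hw2 : wgtF u a R i (pp tp) = (R i : ℤ) := by
        have := (hedge tp htplt).2.2.2.2
        rw [htpsucc, hcc₀] at this
        exact wgt_of_large this
      rw [hs1, hs2, hw1, hw2]
      ring
    · push_neg at hex
      rw [sum_ite_eqZ_zero cc _ (fun t => t) (fun t ht => hex t ht),
        sum_ite_eqZ_zero cc _ (fun t => (t + 1) % L) (fun t ht => hex _ (Nat.mod_lt _ hLpos))]
      ring
  have hge : ∀ i, Wf u a R own i ≤ Wf u a R f i := fun i => (hWf i) ▸ S.hdomge i
  have hst : ∃ j, Wf u a R own j < Wf u a R f j := by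
    obtain ⟨j, hjs⟩ := S.hdomstrict
    exact ⟨j, (hWf j) ▸ hjs⟩
  apply S.move_absurd f hge hst
  rw [Set.ssubset_def]
  have hp0T : pp 0 ∈ TT own own' := (hedge 0 (by omega)).1
  constructor
  · intro x hx
    simp only [Set.mem_setOf_eq] at hx ⊢
    by_cases hxD : x ∈ D
    · exfalso
      apply hx
      simp only [hf, hxD, if_true]
    · have : f x = own' x := by simp only [hf, hxD, if_false]
      rw [this] at hx
      exact hx
  · intro hcc
    have hmm := hcc (show pp 0 ∈ {x | own x ≠ own' x} from mem_TT.1 hp0T)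
    have hp0D : pp 0 ∈ D := by
      rw [hD]
      exact Finset.mem_image.2 ⟨0, Finset.mem_range.2 (by omega), rfl⟩
    have : f (pp 0) = own (pp 0) := by simp only [hf, hp0D, if_true]
    simp only [Set.mem_setOf_eq] at hmm
    exact hmm this.symm

end Hard3
section Hard4
set_option linter.unusedSectionVars false
set_option linter.unusedVariables false
set_option maxHeartbeats 1000000

open Finset
variable {n : ℕ} {M : Type*} [Fintype M] [DecidableEq M]
variable {u : Fin n → M → ℝ} {a b : Fin n → ℝ} {R : Fin n → ℕ} {own own' : M → Fin n}

/-- If there is an SL-transfer `g0 : own g0 → own' g0` followed by an LL-transfer-path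
`cc 0 = own' g0 ⇒ cc 1 ⇒ ⋯ ⇒ cc m`, all agents distinct and distinct from `own g0`,
then (by absence of Type I witnesses) every good owned by `cc m` is large for `cc m`
and small for `own g0`. -/
lemma HSetup.walk_inv (S : HSetup u a b R own own') {g0 : M} (hg0T : g0 ∈ TT own own')
    (hg0small : ¬ u (own g0) g0 = a (own g0))
    (hg0large : u (own' g0) g0 = a (own' g0))
    (m : ℕ) (cc : ℕ → Fin n) (pp : ℕ → M)
    (hc0 : cc 0 = own' g0)
    (hinj : ∀ t, t ≤ m → ∀ t', t' ≤ m → t ≠ t' → cc t ≠ cc t')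
    (hnots : ∀ t, t ≤ m → cc t ≠ own g0)
    (hedge : ∀ t, t < m → pp t ∈ TT own own' ∧ own (pp t) = cc t ∧ own' (pp t) = cc (t + 1)
       ∧ u (cc t) (pp t) = a (cc t) ∧ u (cc (t + 1)) (pp t) = a (cc (t + 1))) :
    ∀ hgd ∈ bundleF own (cc m), u (cc m) hgd = a (cc m) ∧ u (own g0) hgd = b (own g0) := by
  intro hgd hmem
  by_contra hcon
  apply S.hNoI
  refine ⟨m + 2, fun t => if t = 0 then own g0 else cc (t - 1),
    fun t => if t = 0 then g0 else if t ≤ m then pp (t - 1) else hgd,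
    by omega, ?_, ?_, ?_, ?_, ?_, ?_⟩
  · -- distinctness
    intro s hs t ht hst
    simp only
    by_cases hs0 : s = 0 <;> by_cases ht0 : t = 0
    · exact absurd (hs0.trans ht0.symm) hst
    · rw [if_pos hs0, if_neg ht0]
      exact (hnots (t - 1) (by omega)).symm
    · rw [if_neg hs0, if_pos ht0]
      exact hnots (s - 1) (by omega)
    · rw [if_neg hs0, if_neg ht0]
      exact hinj (s - 1) (by omega) (t - 1) (by omega) (by omega)
  · -- membership
    intro t ht
    simp only
    by_cases ht0 : t = 0
    · rw [if_pos ht0, if_pos ht0]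
      have : own g0 = own g0 := rfl
      exact mem_bundleF.2 rfl
    · by_cases htm : t ≤ m
      · rw [if_neg ht0, if_pos htm, if_neg ht0]
        exact mem_bundleF.2 (hedge (t - 1) (by omega)).2.1
      · have htt : t = m + 1 := by omega
        subst htt
        rw [if_neg ht0, if_neg htm, if_neg ht0]
        rw [show m + 1 - 1 = m from rfl]
        exact hmem
  · -- g 0 small for ag 0
    simp only [if_pos rfl]
    exact S.small_iff.2 hg0small
  · -- g 0 large for ag 1
    simp only [if_neg (by omega : ¬ (1 : ℕ) = 0), if_pos rfl]
    rw [show (1 : ℕ) - 1 = 0 from rfl, hc0]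
    exact hg0large
  · -- middle conditions
    intro t h1 h2
    rw [show m + 2 - 2 = m from rfl] at h2
    have ht0 : ¬ t = 0 := by omega
    have ht10 : ¬ t + 1 = 0 := by omega
    constructor
    · simp only
      rw [if_neg ht0, if_neg ht0, if_pos h2]
      exact (hedge (t - 1) (by omega)).2.2.2.1
    · simp only
      rw [if_neg ht10, if_neg ht0, if_pos h2]
      rw [show t + 1 - 1 = t from rfl]
      have := (hedge (t - 1) (by omega)).2.2.2.2
      rwa [show t - 1 + 1 = t by omega] at this
  · -- final condition
    rw [show m + 2 - 1 = m + 1 from rfl]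
    simp only
    rw [if_neg (by omega : ¬ m + 1 = 0), if_neg (by omega : ¬ m + 1 ≤ m),
      if_neg (by omega : ¬ m + 1 = 0)]
    simp only [if_true, eq_self_iff_true]
    rw [show m + 1 - 1 = m from rfl]
    exact hcon

end Hard4
section Hard5
set_option linter.unusedSectionVars false
set_option linter.unusedVariables false
set_option maxHeartbeats 1000000

open Finset
variable {n : ℕ} {M : Type*} [Fintype M] [DecidableEq M]
variable {u : Fin n → M → ℝ} {a b : Fin n → ℝ} {R : Fin n → ℕ} {own own' : M → Fin n}

/-- No transferred good is small for its source but large for its sink. -/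
lemma HSetup.noSL (S : HSetup u a b R own own') {g0 : M} (hg0T : g0 ∈ TT own own')
    (hLsnk : u (own' g0) g0 = a (own' g0)) : u (own g0) g0 = a (own g0) := by
  by_contra hg0small
  have hP : ∀ m : ℕ, ∃ cc : ℕ → Fin n, ∃ pp : ℕ → M, cc 0 = own' g0 ∧
      (∀ t, t ≤ m → ∀ t', t' ≤ m → t ≠ t' → cc t ≠ cc t') ∧
      (∀ t, t ≤ m → cc t ≠ own g0) ∧
      (∀ t, t < m → pp t ∈ TT own own' ∧ own (pp t) = cc t ∧ own' (pp t) = cc (t + 1)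
        ∧ u (cc t) (pp t) = a (cc t) ∧ u (cc (t + 1)) (pp t) = a (cc (t + 1))) := by
    intro m
    induction m with
    | zero =>
      refine ⟨fun _ => own' g0, fun _ => g0, rfl, ?_, ?_, ?_⟩
      · intro t ht t' ht' hne
        exact absurd (by omega : t = t') hne
      · intro t ht hcc
        exact (mem_TT.1 hg0T) hcc.symm
      · intro t ht
        exact absurd ht (Nat.not_lt_zero t)
    | succ m ih =>
      obtain ⟨cc, pp, hc0, hinj, hnots, hedge⟩ := ih
      have hrcv : ∃ gIn, gIn ∈ TT own own' ∧ own' gIn = cc m := by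
        cases m with
        | zero => exact ⟨g0, hg0T, hc0.symm⟩
        | succ m' =>
          have he := hedge m' (by omega)
          exact ⟨pp m', he.1, he.2.2.1⟩
      obtain ⟨gIn, hgInT, hgInSnk⟩ := hrcv
      have houts : (outsF own own' (cc m)).Nonempty := by
        have := S.receiver_sender hgInT
        rwa [hgInSnk] at this
      obtain ⟨gO, hgO⟩ := houts
      rw [mem_outsF] at hgO
      have hgOT : gO ∈ TT own own' := mem_TT.2 hgO.1
      have howngO : own gO = cc m := hgO.2
      have hgOmem : gO ∈ bundleF own (cc m) := mem_bundleF.2 howngO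
      have hLP := S.walk_inv hg0T hg0small hLsnk m cc pp hc0 hinj hnots hedge gO hgOmem
      have hLsrc : u (own gO) gO = a (own gO) := by rw [howngO]; exact hLP.1
      have hLsnk' : u (own' gO) gO = a (own' gO) := by
        by_contra hss
        exact (S.noLS hgOT hss) hLsrc
      have hdm : own' gO ≠ cc m := fun hcc => (mem_TT.1 hgOT) (howngO.trans hcc.symm)
      have hds : own' gO ≠ own g0 := by
        intro hcc
        have h1 := hLP.2
        rw [← hcc] at h1
        rw [h1] at hLsnk'
        exact absurd hLsnk' (ne_of_lt (S.hab (own' gO)))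
      by_cases hdold : ∃ t₀, t₀ ≤ m ∧ cc t₀ = own' gO
      · exfalso
        obtain ⟨t₀, ht₀, hcct₀⟩ := hdold
        have ht₀m : t₀ < m := by
          rcases Nat.lt_or_ge t₀ m with h | h
          · exact h
          · exfalso
            apply hdm
            rw [← hcct₀, show t₀ = m by omega]
        apply S.noLLcycle (m - t₀ + 1) (by omega)
          (fun idx => cc (t₀ + idx))
          (fun idx => if idx = m - t₀ then gO else pp (t₀ + idx))
        · intro s hs t ht hst
          exact hinj (t₀ + s) (by omega) (t₀ + t) (by omega) (by omega)
        · intro t ht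
          try simp only
          by_cases htl : t = m - t₀ + 1 - 1
          · have htl' : t = m - t₀ := by omega
            subst htl'
            rw [if_pos rfl]
            have hmm : t₀ + (m - t₀) = m := by omega
            have hmod : ((m - t₀) + 1) % (m - t₀ + 1) = 0 := by
              rw [Nat.mod_self]
            rw [hmod, hmm, Nat.add_zero, hcct₀]
            exact ⟨hgOT, howngO, rfl, by rw [howngO] at hLsrc; exact hLsrc, hLsnk'⟩
          · have htlt : t < m - t₀ := by omega
            rw [if_neg (by omega : ¬ t = m - t₀)]
            have hmod : (t + 1) % (m - t₀ + 1) = t + 1 := Nat.mod_eq_of_lt (by omega)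
            rw [hmod]
            have he := hedge (t₀ + t) (by omega)
            exact ⟨he.1, he.2.1, he.2.2.1, he.2.2.2.1, he.2.2.2.2⟩
      · push_neg at hdold
        refine ⟨fun t => if t = m + 1 then own' gO else cc t,
          fun t => if t = m then gO else pp t, ?_, ?_, ?_, ?_⟩
        · show (if (0 : ℕ) = m + 1 then own' gO else cc 0) = own' g0
          rw [if_neg (by omega : ¬ (0 : ℕ) = m + 1)]
          exact hc0
        · intro t ht t' ht' hne
          try simp only
          by_cases h1 : t = m + 1 <;> by_cases h2 : t' = m + 1
          · exact absurd (h1.trans h2.symm) hne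
          · rw [if_pos h1, if_neg h2]
            exact fun hcc => (hdold t' (by omega)) hcc.symm
          · rw [if_neg h1, if_pos h2]
            exact hdold t (by omega)
          · rw [if_neg h1, if_neg h2]
            exact hinj t (by omega) t' (by omega) hne
        · intro t ht
          try simp only
          by_cases h1 : t = m + 1
          · rw [if_pos h1]
            exact hds
          · rw [if_neg h1]
            exact hnots t (by omega)
        · intro t ht
          try simp only
          by_cases h1 : t = m
          · rw [if_pos h1]
            have e1 : (if t = m + 1 then own' gO else cc t) = cc t := if_neg (by omega)
            have e2 : (if t + 1 = m + 1 then own' gO else cc (t + 1)) = own' gO :=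
              if_pos (by omega)
            rw [e1, e2, h1]
            exact ⟨hgOT, howngO, rfl, by rw [howngO] at hLsrc; exact hLsrc, hLsnk'⟩
          · rw [if_neg h1]
            have e1 : (if t = m + 1 then own' gO else cc t) = cc t := if_neg (by omega)
            have e2 : (if t + 1 = m + 1 then own' gO else cc (t + 1)) = cc (t + 1) :=
              if_neg (by omega)
            rw [e1, e2]
            exact hedge t (by omega)
  obtain ⟨cc, pp, hc0, hinj, -, -⟩ := hP n
  have hinjF : Function.Injective (fun v : Fin (n + 1) => cc v.val) := by
    intro v w hvw
    by_contra hne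
    have hv := v.isLt
    have hw := w.isLt
    have hvw' : v.val ≠ w.val := fun h => hne (Fin.ext h)
    exact (hinj v.val (by omega) w.val (by omega) hvw') hvw
  have hcard := Fintype.card_le_of_injective _ hinjF
  simp only [Fintype.card_fin] at hcard
  omega

end Hard5
section Hard6
set_option linter.unusedSectionVars false
set_option linter.unusedVariables false
set_option maxHeartbeats 1000000

open Finset
variable {n : ℕ} {M : Type*} [Fintype M] [DecidableEq M]

/-- An LL-transfer path. -/
def IsPathH (u : Fin n → M → ℝ) (a : Fin n → ℝ) (own own' : M → Fin n)
    (L : ℕ) (cc : ℕ → Fin n) (pp : ℕ → M) : Prop :=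
  (∀ t, t ≤ L → ∀ t', t' ≤ L → t ≠ t' → cc t ≠ cc t') ∧
  (∀ t, t < L → pp t ∈ TT own own' ∧ own (pp t) = cc t ∧ own' (pp t) = cc (t + 1)
    ∧ u (cc t) (pp t) = a (cc t) ∧ u (cc (t + 1)) (pp t) = a (cc (t + 1)))

variable {u : Fin n → M → ℝ} {a b : Fin n → ℝ} {R : Fin n → ℕ} {own own' : M → Fin n}

/-- Transport of smallness backwards along LL-paths (via absence of Type I witnesses):
any good of the last agent which is small for it is small for every agent on the path. -/
lemma HSetup.transport (S : HSetup u a b R own own') {L : ℕ} {cc : ℕ → Fin n} {pp : ℕ → M}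
    (hp : IsPathH u a own own' L cc pp)
    {hgd : M} (hmem : hgd ∈ bundleF own (cc L)) (hsm : ¬ u (cc L) hgd = a (cc L)) :
    ∀ t, t ≤ L → ¬ u (cc t) hgd = a (cc t) := by
  intro t htL
  rcases eq_or_lt_of_le htL with rfl | hlt
  · exact hsm
  by_contra hLt
  apply S.hNoI
  have e1 : L - t + 1 - 1 = L - t := by omega
  have e2 : L - t + 1 - 2 = L - t - 1 := by omega
  refine ⟨L - t + 1, fun j => if j = 0 then cc L else cc (t + (j - 1)),
    fun j => if j = 0 then hgd else pp (t + (j - 1)), by omega, ?_, ?_, ?_, ?_, ?_, ?_⟩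
  · intro s hs j hj hne
    try simp only
    by_cases hs0 : s = 0 <;> by_cases hj0 : j = 0
    · exact absurd (hs0.trans hj0.symm) hne
    · rw [if_pos hs0, if_neg hj0]
      exact hp.1 L (le_refl L) (t + (j - 1)) (by omega) (by omega)
    · rw [if_neg hs0, if_pos hj0]
      exact hp.1 (t + (s - 1)) (by omega) L (le_refl L) (by omega)
    · rw [if_neg hs0, if_neg hj0]
      exact hp.1 (t + (s - 1)) (by omega) (t + (j - 1)) (by omega) (by omega)
  · intro j hj
    try simp only
    by_cases hj0 : j = 0
    · rw [if_pos hj0, if_pos hj0]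
      exact hmem
    · rw [if_neg hj0, if_neg hj0]
      exact mem_bundleF.2 (hp.2 (t + (j - 1)) (by omega)).2.1
  · simp only [if_pos rfl]
    exact S.small_iff.2 hsm
  · have hne1 : ¬ (1 : ℕ) = 0 := by omega
    simp only [if_neg hne1]
    rw [show t + (1 - 1) = t from by omega]
    exact hLt
  · intro j h1 h2
    rw [e2] at h2
    have hj0 : ¬ j = 0 := by omega
    have hj10 : ¬ j + 1 = 0 := by omega
    constructor
    · try simp only
      rw [if_neg hj0, if_neg hj0]
      exact (hp.2 (t + (j - 1)) (by omega)).2.2.2.1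
    · try simp only
      rw [if_neg hj10, if_neg hj0]
      have := (hp.2 (t + (j - 1)) (by omega)).2.2.2.2
      rwa [show t + (j - 1) + 1 = t + (j + 1 - 1) by omega] at this
  · rw [e1]
    have hne : ¬ (L - t) = 0 := by omega
    try simp only
    rw [if_neg hne, if_neg hne]
    simp only [if_true, eq_self_iff_true]
    rintro ⟨-, hbad⟩
    have hLL := (hp.2 (L - 1) (by omega)).2.2.2.2
    rw [show L - 1 + 1 = L by omega] at hLL
    rw [show t + (L - t - 1) = L - 1 by omega] at hbad
    rw [hbad] at hLL
    exact absurd hLL (ne_of_lt (S.hab (cc L)))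

/-- By absence of Type II witnesses: if an LL-path ends at an agent with strictly larger
ratio, then it owns fewer than `R (cc 0)` small goods. -/
lemma HSetup.typeII_bound (S : HSetup u a b R own own') {L : ℕ} {cc : ℕ → Fin n} {pp : ℕ → M}
    (hp : IsPathH u a own own' L cc pp) (hL : 1 ≤ L)
    (hRlt : R (cc 0) < R (cc L)) :
    ((bundleF own (cc L)).filter (fun gd => ¬ u (cc L) gd = a (cc L))).card < R (cc 0) := by
  by_contra hcon
  push_neg at hcon
  obtain ⟨sub, hsub, hcard⟩ := Finset.exists_subset_card_eq hcon
  have hlen : sub.toList.length = R (cc 0) := by rw [Finset.length_toList, hcard]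
  set hh : ℕ → M := fun j => sub.toList.getD j (pp 0) with hhh
  have hhval : ∀ j, j < R (cc 0) → ∀ (hjl : j < sub.toList.length), hh j = sub.toList[j] := by
    intro j hj hjl
    rw [hhh]
    exact List.getD_eq_getElem _ _ hjl
  have hhmem : ∀ j, j < R (cc 0) → hh j ∈ sub := by
    intro j hj
    rw [hhval j hj (by omega)]
    exact Finset.mem_toList.1 (List.getElem_mem _)
  have hhsmall : ∀ j, j < R (cc 0) →
      hh j ∈ bundleF own (cc L) ∧ ¬ u (cc L) (hh j) = a (cc L) := by
    intro j hj
    have := hsub (hhmem j hj)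
    rw [Finset.mem_filter] at this
    exact this
  have hhinj : ∀ j, j < R (cc 0) → ∀ j', j' < R (cc 0) → j ≠ j' → hh j ≠ hh j' := by
    intro j hj j' hj' hne heq
    apply hne
    rw [hhval j hj (by omega), hhval j' hj' (by omega)] at heq
    exact ((Finset.nodup_toList sub).getElem_inj_iff).1 heq
  apply S.hNoII
  have hbne : ∀ i, b i ≠ 0 := fun i => ne_of_gt (S.hb i)
  have hdiv : ∀ i, a i / b i = (R i : ℝ) := by
    intro i
    rw [S.haR i, mul_div_assoc, div_self (hbne i), mul_one]
  refine ⟨L + 1, R (cc 0), cc, hh, pp, by omega, by have := S.hR2 (cc 0); omega,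
    ?_, ?_, ?_, ?_, ?_, ?_⟩
  · intro s hs t ht hst
    exact hp.1 s (by omega) t (by omega) hst
  · exact hdiv (cc 0)
  · rw [show L + 1 - 1 = L from rfl, hdiv (cc 0), hdiv (cc L)]
    exact_mod_cast hRlt
  · exact hhinj
  · intro j hj
    rw [show L + 1 - 1 = L from rfl]
    refine ⟨(hhsmall j hj).1, S.small_iff.2 (hhsmall j hj).2, ?_⟩
    exact S.small_iff.2 (S.transport hp (hhsmall j hj).1 (hhsmall j hj).2 0 (by omega))
  · intro t ht
    rw [show L + 1 - 1 = L from rfl] at ht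
    refine ⟨mem_bundleF.2 (hp.2 t ht).2.1, (hp.2 t ht).2.2.2.1, (hp.2 t ht).2.2.2.2⟩

end Hard6
section Hard7
set_option linter.unusedSectionVars false
set_option linter.unusedVariables false
set_option maxHeartbeats 1000000

open Finset
variable {n : ℕ} {M : Type*} [Fintype M] [DecidableEq M]
variable {u : Fin n → M → ℝ} {a b : Fin n → ℝ} {R : Fin n → ℕ} {own own' : M → Fin n}

/-- the set of possible starting ratios of LL-paths ending at `v` -/
def PsiS (u : Fin n → M → ℝ) (a : Fin n → ℝ) (R : Fin n → ℕ) (own own' : M → Fin n)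
    (v : Fin n) : Set ℕ :=
  {r | ∃ L cc pp, IsPathH u a own own' L cc pp ∧ cc L = v ∧ R (cc 0) = r}

noncomputable def Psi (u : Fin n → M → ℝ) (a : Fin n → ℝ) (R : Fin n → ℕ)
    (own own' : M → Fin n) (v : Fin n) : ℕ :=
  sInf (PsiS u a R own own' v)

lemma psiS_self (hTne : (TT own own').Nonempty) (v : Fin n) :
    R v ∈ PsiS u a R own own' v := by
  refine ⟨0, fun _ => v, fun _ => hTne.choose, ⟨?_, ?_⟩, rfl, rfl⟩
  · intro t ht t' ht' hne
    exact absurd (by omega : t = t') hne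
  · intro t ht
    exact absurd ht (Nat.not_lt_zero t)

lemma psi_mem (hTne : (TT own own').Nonempty) (v : Fin n) :
    Psi u a R own own' v ∈ PsiS u a R own own' v :=
  Nat.sInf_mem ⟨R v, psiS_self hTne v⟩

lemma psi_le (hTne : (TT own own').Nonempty) (v : Fin n) :
    Psi u a R own own' v ≤ R v :=
  Nat.sInf_le (psiS_self hTne v)

lemma HSetup.psi_ge2 (S : HSetup u a b R own own') (hTne : (TT own own').Nonempty)
    (v : Fin n) : 2 ≤ Psi u a R own own' v := by
  obtain ⟨L, cc, pp, hp, hend, hstart⟩ := psi_mem hTne v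
  rw [← hstart]
  exact S.hR2 (cc 0)

/-- Ψ is monotone along LL-transfer edges. -/
lemma HSetup.psi_mono (S : HSetup u a b R own own') (hTne : (TT own own').Nonempty)
    {gd : M} (hgd : gd ∈ TT own own') (hLgd : u (own gd) gd = a (own gd)) :
    Psi u a R own own' (own' gd) ≤ Psi u a R own own' (own gd) := by
  obtain ⟨L, cc, pp, hp, hend, hstart⟩ := psi_mem hTne (own gd)
  have hLsnk' : u (own' gd) gd = a (own' gd) := by
    by_contra hss
    exact (S.noLS hgd hss) hLgd
  have hnewold : ∀ t₀, t₀ ≤ L → cc t₀ ≠ own' gd := by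
    intro t₀ ht₀ hcct₀
    have ht₀m : t₀ < L := by
      rcases Nat.lt_or_ge t₀ L with h | h
      · exact h
      · exfalso
        have : t₀ = L := by omega
        rw [this, hend] at hcct₀
        exact (mem_TT.1 hgd) (hcct₀ ▸ rfl)
    apply S.noLLcycle (L - t₀ + 1) (by omega)
      (fun idx => cc (t₀ + idx))
      (fun idx => if idx = L - t₀ then gd else pp (t₀ + idx))
    · intro s hs t ht hst
      exact hp.1 (t₀ + s) (by omega) (t₀ + t) (by omega) (by omega)
    · intro t ht
      try simp only
      by_cases htl : t = L - t₀
      · rw [if_pos htl, htl]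
        have hmod : ((L - t₀) + 1) % (L - t₀ + 1) = 0 := by rw [Nat.mod_self]
        rw [hmod, Nat.add_zero, hcct₀]
        have hmm : t₀ + (L - t₀) = L := by omega
        rw [hmm, hend]
        exact ⟨hgd, rfl, rfl, hLgd, hLsnk'⟩
      · rw [if_neg htl]
        have hmod : (t + 1) % (L - t₀ + 1) = t + 1 := Nat.mod_eq_of_lt (by omega)
        rw [hmod]
        have he := hp.2 (t₀ + t) (by omega)
        exact ⟨he.1, he.2.1, he.2.2.1, he.2.2.2.1, he.2.2.2.2⟩
  apply Nat.sInf_le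
  refine ⟨L + 1, fun t => if t = L + 1 then own' gd else cc t,
    fun t => if t = L then gd else pp t, ⟨?_, ?_⟩, ?_, ?_⟩
  · intro t ht t' ht' hne
    try simp only
    by_cases h1 : t = L + 1 <;> by_cases h2 : t' = L + 1
    · exact absurd (h1.trans h2.symm) hne
    · rw [if_pos h1, if_neg h2]
      exact fun hcc => (hnewold t' (by omega)) hcc.symm
    · rw [if_neg h1, if_pos h2]
      exact hnewold t (by omega)
    · rw [if_neg h1, if_neg h2]
      exact hp.1 t (by omega) t' (by omega) hne
  · intro t ht
    try simp only
    by_cases h1 : t = L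
    · rw [if_pos h1]
      have e1 : (if t = L + 1 then own' gd else cc t) = cc t := if_neg (by omega)
      have e2 : (if t + 1 = L + 1 then own' gd else cc (t + 1)) = own' gd := if_pos (by omega)
      rw [e1, e2, h1, hend]
      exact ⟨hgd, rfl, rfl, hLgd, hLsnk'⟩
    · rw [if_neg h1]
      have e1 : (if t = L + 1 then own' gd else cc t) = cc t := if_neg (by omega)
      have e2 : (if t + 1 = L + 1 then own' gd else cc (t + 1)) = cc (t + 1) :=
        if_neg (by omega)
      rw [e1, e2]
      exact hp.2 t (by omega)
  · simp only [if_true, eq_self_iff_true]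
  · show R (if (0 : ℕ) = L + 1 then own' gd else cc 0) = Psi u a R own own' (own gd)
    rw [if_neg (by omega : ¬ (0 : ℕ) = L + 1)]
    exact hstart

end Hard7
section Hard8
set_option linter.unusedSectionVars false
set_option linter.unusedVariables false
set_option maxHeartbeats 1000000

open Finset
variable {n : ℕ} {M : Type*} [Fintype M] [DecidableEq M]
variable {u : Fin n → M → ℝ} {a : Fin n → ℝ} {own own' : M → Fin n}

noncomputable def plF (u : Fin n → M → ℝ) (a : Fin n → ℝ) (own own' : M → Fin n)
    (i : Fin n) : ℕ := ((insF own own' i).filter (fun gd => u i gd = a i)).card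
noncomputable def qsF (u : Fin n → M → ℝ) (a : Fin n → ℝ) (own own' : M → Fin n)
    (i : Fin n) : ℕ := ((insF own own' i).filter (fun gd => ¬ u i gd = a i)).card
noncomputable def PLF (u : Fin n → M → ℝ) (a : Fin n → ℝ) (own own' : M → Fin n)
    (i : Fin n) : ℕ := ((outsF own own' i).filter (fun gd => u i gd = a i)).card
noncomputable def QSF (u : Fin n → M → ℝ) (a : Fin n → ℝ) (own own' : M → Fin n)
    (i : Fin n) : ℕ := ((outsF own own' i).filter (fun gd => ¬ u i gd = a i)).card

variable {b : Fin n → ℝ} {R : Fin n → ℕ}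

lemma sum_wgt_eq (S : HSetup u a b R own own') (i : Fin n) (F : Finset M) :
    ∑ gd ∈ F, wgtF u a R i gd
      = (R i : ℤ) * ((F.filter (fun gd => u i gd = a i)).card : ℤ)
        + ((F.filter (fun gd => ¬ u i gd = a i)).card : ℤ) := by
  rw [← Finset.sum_filter_add_sum_filter_not F (fun gd => u i gd = a i)]
  congr 1
  · rw [Finset.sum_congr rfl (fun gd hgd => wgt_of_large (Finset.mem_filter.1 hgd).2),
      Finset.sum_const, nsmul_eq_mul]
    ring
  · rw [Finset.sum_congr rfl (fun gd hgd => wgt_of_small (Finset.mem_filter.1 hgd).2),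
      Finset.sum_const, nsmul_eq_mul]
    ring

lemma HSetup.delta_eq (S : HSetup u a b R own own') (i : Fin n) :
    deltaF u a R own own' i
      = (R i : ℤ) * (plF u a own own' i : ℤ) + (qsF u a own own' i : ℤ)
        - (R i : ℤ) * (PLF u a own own' i : ℤ) - (QSF u a own own' i : ℤ) := by
  rw [S.delta_decomp i, sum_wgt_eq S i, sum_wgt_eq S i]
  unfold plF qsF PLF QSF
  ring

lemma HSetup.qs_pos_delta0 (S : HSetup u a b R own own') {i : Fin n}
    (h : 1 ≤ qsF u a own own' i) : deltaF u a R own own' i = 0 := by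
  unfold qsF at h
  obtain ⟨gd, hgd⟩ := Finset.card_pos.1 h
  rw [Finset.mem_filter] at hgd
  exact S.smallin_delta0 hgd.1 hgd.2

lemma HSetup.qs_pos_QS0 (S : HSetup u a b R own own') {i : Fin n}
    (h : 1 ≤ qsF u a own own' i) : QSF u a own own' i = 0 := by
  by_contra hQS
  have hQS' : 1 ≤ QSF u a own own' i := by omega
  unfold qsF at h
  unfold QSF at hQS'
  obtain ⟨gIn, hgIn⟩ := Finset.card_pos.1 h
  obtain ⟨gOut, hgOut⟩ := Finset.card_pos.1 hQS'
  rw [Finset.mem_filter] at hgIn hgOut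
  have hOT : gOut ∈ TT own own' := (Finset.mem_filter.1 hgOut.1).1
  have hOi : own gOut = i := (mem_outsF.1 hgOut.1).2
  have hsnk : ¬ u (own' gOut) gOut = a (own' gOut) := by
    intro hLsnk
    apply hgOut.2
    rw [← hOi]
    exact S.noSL hOT hLsnk
  exact S.no_smallin_smallout hgIn.1 hgIn.2 hgOut.1 hsnk

lemma HSetup.pl_pos_delta_lt (S : HSetup u a b R own own') {i : Fin n}
    (h : 1 ≤ plF u a own own' i) : deltaF u a R own own' i ≤ (R i : ℤ) - 1 := by
  unfold plF at h
  obtain ⟨gd, hgd⟩ := Finset.card_pos.1 h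
  rw [Finset.mem_filter] at hgd
  have hT : gd ∈ TT own own' := (Finset.mem_filter.1 hgd.1).1
  have hsnk : own' gd = i := (mem_insF.1 hgd.1).2
  have := S.needed hT
  rw [hsnk] at this
  rw [wgt_of_large hgd.2] at this
  omega

lemma HSetup.QS_le_small_bundle (S : HSetup u a b R own own') (i : Fin n) :
    QSF u a own own' i ≤ ((bundleF own i).filter (fun gd => ¬ u i gd = a i)).card := by
  apply Finset.card_le_card
  intro gd hgd
  rw [Finset.mem_filter] at hgd ⊢
  exact ⟨mem_bundleF.2 (mem_outsF.1 hgd.1).2, hgd.2⟩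

/-- If Ψ i < R i then `QS i ≤ Ψ i - 1`. -/
lemma HSetup.QS_bound (S : HSetup u a b R own own') (hTne : (TT own own').Nonempty)
    {i : Fin n} (hlt : Psi u a R own own' i < R i) :
    (QSF u a own own' i : ℤ) ≤ (Psi u a R own own' i : ℤ) - 1 := by
  obtain ⟨L, cc, pp, hp, hend, hstart⟩ := psi_mem (u := u) (a := a) (R := R) hTne i
  have hL1 : 1 ≤ L := by
    by_contra hL0
    have hL0' : L = 0 := by omega
    rw [hL0'] at hend
    rw [hend] at hstart
    omega
  have hb2 := S.typeII_bound hp hL1 (by rw [hstart, hend]; exact hlt)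
  rw [hend] at hb2
  rw [hstart] at hb2
  have := S.QS_le_small_bundle i
  omega

end Hard8
section Hard9
set_option linter.unusedSectionVars false
set_option linter.unusedVariables false
set_option maxHeartbeats 1000000

open Finset
variable {n : ℕ} {M : Type*} [Fintype M] [DecidableEq M]
variable {u : Fin n → M → ℝ} {a b : Fin n → ℝ} {R : Fin n → ℕ} {own own' : M → Fin n}

lemma HSetup.phi_bound (S : HSetup u a b R own own') (hTne : (TT own own').Nonempty)
    {jst : Fin n} (hjst : 1 ≤ deltaF u a R own own' jst) (i : Fin n) :
    (Psi u a R own own' i : ℤ) * ((PLF u a own own' i : ℤ) - (plF u a own own' i : ℤ))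
      + ((QSF u a own own' i : ℤ) - (qsF u a own own' i : ℤ))
      ≤ if i = jst then -1 else 0 := by
  have hδeq := S.delta_eq i
  have hδ0 := S.delta_nonneg i
  have hP2 : (2 : ℤ) ≤ (Psi u a R own own' i : ℤ) := by exact_mod_cast S.psi_ge2 hTne i
  have hPle : (Psi u a R own own' i : ℤ) ≤ (R i : ℤ) := by
    exact_mod_cast psi_le (u := u) (a := a) (R := R) hTne i
  have hR2 : (2 : ℤ) ≤ (R i : ℤ) := by exact_mod_cast S.hR2 i
  set Pz := (Psi u a R own own' i : ℤ) with hPzd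
  set Rz := (R i : ℤ) with hRzd
  set plz := (plF u a own own' i : ℤ) with hplzd
  set PLz := (PLF u a own own' i : ℤ) with hPLzd
  set qsz := (qsF u a own own' i : ℤ) with hqszd
  set QSz := (QSF u a own own' i : ℤ) with hQSzd
  have hpl0 : (0 : ℤ) ≤ plz := by rw [hplzd]; positivity
  have hPL0 : (0 : ℤ) ≤ PLz := by rw [hPLzd]; positivity
  have hqs0' : (0 : ℤ) ≤ qsz := by rw [hqszd]; positivity
  have hQS0' : (0 : ℤ) ≤ QSz := by rw [hQSzd]; positivity
  by_cases hqs : 1 ≤ qsF u a own own' i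
  · -- i receives a small good
    have hq1 : (1 : ℤ) ≤ qsz := by rw [hqszd]; exact_mod_cast hqs
    have hδz := S.qs_pos_delta0 (R := R) hqs
    have hQS0 : QSz = 0 := by rw [hQSzd]; exact_mod_cast S.qs_pos_QS0 hqs
    have hine : ¬ i = jst := by
      intro h
      rw [← h] at hjst
      omega
    rw [if_neg hine]
    rw [hδz] at hδeq
    have key : (1 : ℤ) ≤ PLz - plz := by nlinarith [hδeq, hq1, hR2, hQS0, hQS0']
    have hprod : Pz * (PLz - plz) ≤ Rz * (PLz - plz) :=
      mul_le_mul_of_nonneg_right hPle (by linarith)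
    nlinarith [hprod]
  · have hqs0 : qsz = 0 := by
      rw [hqszd]
      exact_mod_cast (by omega : qsF u a own own' i = 0)
    by_cases hQS : 1 ≤ QSF u a own own' i
    · -- i sends a small good
      have hQ1 : (1 : ℤ) ≤ QSz := by rw [hQSzd]; exact_mod_cast hQS
      have key : (1 : ℤ) ≤ plz - PLz := by nlinarith [hδeq, hδ0, hQ1, hR2, hqs0]
      by_cases hPR : Pz = Rz
      · by_cases h : i = jst
        · rw [if_pos h]
          have hjst' : (1 : ℤ) ≤ deltaF u a R own own' i := by rw [h]; exact hjst
          nlinarith [hδeq, hjst', hqs0, hPR]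
        · rw [if_neg h]
          nlinarith [hδeq, hδ0, hqs0, hPR]
      · have hPlt : Psi u a R own own' i < R i := by
          have : Pz < Rz := lt_of_le_of_ne hPle hPR
          rw [hPzd, hRzd] at this
          exact_mod_cast this
        have hQSb := S.QS_bound hTne hPlt
        rw [← hQSzd, ← hPzd] at hQSb
        have hprod : Pz * 1 ≤ Pz * (plz - PLz) :=
          mul_le_mul_of_nonneg_left key (by linarith)
        have hfin : Pz * (PLz - plz) + (QSz - qsz) ≤ -1 := by nlinarith [hprod, hQSb, hqs0]
        split_ifs <;> linarith
    · -- pure agent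
      have hQS0 : QSz = 0 := by
        rw [hQSzd]
        exact_mod_cast (by omega : QSF u a own own' i = 0)
      by_cases h : i = jst
      · rw [if_pos h]
        have hjst' : (1 : ℤ) ≤ deltaF u a R own own' i := by rw [h]; exact hjst
        have key : (1 : ℤ) ≤ plz - PLz := by nlinarith [hδeq, hjst', hqs0, hQS0, hR2]
        have hprod : Pz * 1 ≤ Pz * (plz - PLz) :=
          mul_le_mul_of_nonneg_left key (by linarith)
        nlinarith [hprod, hP2, hqs0, hQS0]
      · rw [if_neg h]
        have hplPL : PLz - plz ≤ 0 := by nlinarith [hδeq, hδ0, hqs0, hQS0, hR2]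
        have hprod : Pz * (PLz - plz) ≤ Pz * 0 :=
          mul_le_mul_of_nonneg_left hplPL (by linarith)
        nlinarith [hprod, hqs0, hQS0]

end Hard9
section Hard10
set_option linter.unusedSectionVars false
set_option linter.unusedVariables false
set_option maxHeartbeats 1000000

open Finset
variable {n : ℕ} {M : Type*} [Fintype M] [DecidableEq M]
variable {u : Fin n → M → ℝ} {a b : Fin n → ℝ} {R : Fin n → ℕ} {own own' : M → Fin n}

lemma HSetup.LL_iff (S : HSetup u a b R own own') {gd : M} (hgd : gd ∈ TT own own') :
    u (own gd) gd = a (own gd) ↔ u (own' gd) gd = a (own' gd) := by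
  constructor
  · intro hsrc
    by_contra hsnk
    exact (S.noLS hgd hsnk) hsrc
  · exact S.noSL hgd

lemma HSetup.sum_QS_eq (S : HSetup u a b R own own') :
    ∑ i : Fin n, QSF u a own own' i = ∑ i : Fin n, qsF u a own own' i := by
  have h1 : ∀ i, QSF u a own own' i =
      (((TT own own').filter (fun gd => ¬ u (own gd) gd = a (own gd))).filter
        (fun gd => own gd = i)).card := by
    intro i
    unfold QSF outsF
    congr 1
    ext gd
    simp only [Finset.mem_filter]
    constructor
    · rintro ⟨⟨hT, hi⟩, hs⟩
      exact ⟨⟨hT, by rw [hi]; exact hs⟩, hi⟩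
    · rintro ⟨⟨hT, hs⟩, hi⟩
      refine ⟨⟨hT, hi⟩, ?_⟩
      rw [← hi]
      exact hs
  have h2 : ∀ i, qsF u a own own' i =
      (((TT own own').filter (fun gd => ¬ u (own' gd) gd = a (own' gd))).filter
        (fun gd => own' gd = i)).card := by
    intro i
    unfold qsF insF
    congr 1
    ext gd
    simp only [Finset.mem_filter]
    constructor
    · rintro ⟨⟨hT, hi⟩, hs⟩
      exact ⟨⟨hT, by rw [hi]; exact hs⟩, hi⟩
    · rintro ⟨⟨hT, hs⟩, hi⟩
      refine ⟨⟨hT, hi⟩, ?_⟩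
      rw [← hi]
      exact hs
  have hfeq : (TT own own').filter (fun gd => ¬ u (own gd) gd = a (own gd))
      = (TT own own').filter (fun gd => ¬ u (own' gd) gd = a (own' gd)) := by
    apply Finset.filter_congr
    intro gd hgd
    exact not_congr (S.LL_iff hgd)
  rw [Finset.sum_congr rfl (fun i _ => h1 i), Finset.sum_congr rfl (fun i _ => h2 i)]
  rw [← Finset.card_eq_sum_card_fiberwise (fun gd _ => Finset.mem_univ (own gd)),
    ← Finset.card_eq_sum_card_fiberwise (fun gd _ => Finset.mem_univ (own' gd)), hfeq]

lemma HSetup.sum_psi (S : HSetup u a b R own own') (hTne : (TT own own').Nonempty) :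
    0 ≤ ∑ i : Fin n, (Psi u a R own own' i : ℤ)
      * ((PLF u a own own' i : ℤ) - (plF u a own own' i : ℤ)) := by
  set TL := (TT own own').filter (fun gd => u (own gd) gd = a (own gd)) with hTL
  have hPL : ∀ i : Fin n, (Psi u a R own own' i : ℤ) * (PLF u a own own' i : ℤ)
      = ∑ gd ∈ TL.filter (fun gd => own gd = i), (Psi u a R own own' (own gd) : ℤ) := by
    intro i
    rw [Finset.sum_congr rfl (fun gd hgd => by
      rw [(Finset.mem_filter.1 hgd).2])]
    rw [Finset.sum_const, nsmul_eq_mul]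
    have hcard : (TL.filter (fun gd => own gd = i)).card = PLF u a own own' i := by
      unfold PLF outsF
      congr 1
      ext gd
      simp only [hTL, Finset.mem_filter]
      constructor
      · rintro ⟨⟨hT, hs⟩, hi⟩
        refine ⟨⟨hT, hi⟩, ?_⟩
        rw [← hi]
        exact hs
      · rintro ⟨⟨hT, hi⟩, hs⟩
        exact ⟨⟨hT, by rw [hi]; exact hs⟩, hi⟩
    rw [hcard]
    ring
  have hpl : ∀ i : Fin n, (Psi u a R own own' i : ℤ) * (plF u a own own' i : ℤ)
      = ∑ gd ∈ TL.filter (fun gd => own' gd = i), (Psi u a R own own' (own' gd) : ℤ) := by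
    intro i
    rw [Finset.sum_congr rfl (fun gd hgd => by
      rw [(Finset.mem_filter.1 hgd).2])]
    rw [Finset.sum_const, nsmul_eq_mul]
    have hcard : (TL.filter (fun gd => own' gd = i)).card = plF u a own own' i := by
      unfold plF insF
      congr 1
      ext gd
      simp only [hTL, Finset.mem_filter]
      constructor
      · rintro ⟨⟨hT, hs⟩, hi⟩
        refine ⟨⟨hT, hi⟩, ?_⟩
        rw [← hi]
        exact (S.LL_iff hT).1 hs
      · rintro ⟨⟨hT, hi⟩, hs⟩
        refine ⟨⟨hT, (S.LL_iff hT).2 ?_⟩, hi⟩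
        rw [hi]
        exact hs
    rw [hcard]
    ring
  have hsplit : ∀ i : Fin n, (Psi u a R own own' i : ℤ)
      * ((PLF u a own own' i : ℤ) - (plF u a own own' i : ℤ))
      = (Psi u a R own own' i : ℤ) * (PLF u a own own' i : ℤ)
        - (Psi u a R own own' i : ℤ) * (plF u a own own' i : ℤ) := fun i => by ring
  rw [Finset.sum_congr rfl (fun i _ => hsplit i), Finset.sum_sub_distrib]
  rw [Finset.sum_congr rfl (fun i _ => hPL i), Finset.sum_congr rfl (fun i _ => hpl i)]
  rw [Finset.sum_fiberwise_of_maps_to (fun gd _ => Finset.mem_univ (own gd)),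
    Finset.sum_fiberwise_of_maps_to (fun gd _ => Finset.mem_univ (own' gd))]
  rw [← Finset.sum_sub_distrib]
  apply Finset.sum_nonneg
  intro gd hgd
  rw [Finset.mem_filter] at hgd
  have hmono := S.psi_mono hTne hgd.1 hgd.2
  have : (Psi u a R own own' (own' gd) : ℤ) ≤ (Psi u a R own own' (own gd) : ℤ) := by
    exact_mod_cast hmono
  linarith

/-- The final contradiction of the hard direction. -/
lemma HSetup.final (S : HSetup u a b R own own') : False := by
  obtain ⟨jst, hjstW⟩ := S.hdomstrict
  have hjst : 1 ≤ deltaF u a R own own' jst := by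
    unfold deltaF
    omega
  have hTne : (TT own own').Nonempty := by
    by_contra h
    rw [Finset.not_nonempty_iff_eq_empty] at h
    have hall : ∀ gd : M, own gd = own' gd := by
      intro gd
      by_contra hne
      have : gd ∈ TT own own' := mem_TT.2 hne
      rw [h] at this
      exact absurd this (Finset.notMem_empty gd)
    have : Wf u a R own jst = Wf u a R own' jst := by
      unfold Wf sumIf
      exact Finset.sum_congr rfl (fun gd _ => by rw [hall gd])
    omega
  have hper : ∀ i ∈ Finset.univ, (Psi u a R own own' i : ℤ)
      * ((PLF u a own own' i : ℤ) - (plF u a own own' i : ℤ))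
      + ((QSF u a own own' i : ℤ) - (qsF u a own own' i : ℤ))
      ≤ if i = jst then (-1 : ℤ) else 0 :=
    fun i _ => S.phi_bound hTne hjst i
  have hsum := Finset.sum_le_sum hper
  rw [Finset.sum_ite_eq' Finset.univ jst (fun _ => (-1 : ℤ)),
    if_pos (Finset.mem_univ jst)] at hsum
  rw [Finset.sum_add_distrib] at hsum
  have h3 := S.sum_psi hTne
  have h4 : ∑ i : Fin n, ((QSF u a own own' i : ℤ) - (qsF u a own own' i : ℤ)) = 0 := by
    rw [Finset.sum_sub_distrib]
    have := S.sum_QS_eq (R := R)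
    have hc1 : ∑ i : Fin n, (QSF u a own own' i : ℤ)
        = ((∑ i : Fin n, QSF u a own own' i : ℕ) : ℤ) := by push_cast; rfl
    have hc2 : ∑ i : Fin n, (qsF u a own own' i : ℤ)
        = ((∑ i : Fin n, qsF u a own own' i : ℕ) : ℤ) := by push_cast; rfl
    rw [hc1, hc2, this, sub_self]
  rw [h4] at hsum
  linarith

end Hard10
set_option linter.unusedVariables false in
set_option maxHeartbeats 1000000 in
/-- In a personalized bi-valued instance in which every ratio
`rᵢ = aᵢ / bᵢ` is a positive integer, an allocation is Pareto-optimal iff it admits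
neither a Type I witness nor a Type II witness. -/
theorem paretoOptimal_iff_no_witness
    (n : ℕ) (M : Type*) [Fintype M] [DecidableEq M]
    (u : Fin n → M → ℝ) (a b : Fin n → ℝ)
    (hab : ∀ i, b i < a i) (hb : ∀ i, 0 < b i)
    (hbi : ∀ i g, u i g = a i ∨ u i g = b i)
    (hint : ∀ i, ∃ R : ℕ, 0 < R ∧ a i / b i = (R : ℝ))
    (X : Fin n → Finset M) (hX : IsAllocation X) :
    IsParetoOptimal u X ↔ ¬ TypeIWitness u a b X ∧ ¬ TypeIIWitness u a b X := by
  constructor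
  · intro hPO
    constructor
    · intro hW
      exact hPO (typeI_improvement hab hbi hX hW)
    · intro hW
      exact hPO (typeII_improvement hab hb hbi hX hW)
  · rintro ⟨hNoI, hNoII⟩
    intro hcon
    obtain ⟨X', hX'alloc, hX'dom⟩ := hcon
    classical
    set R : Fin n → ℕ := fun i => (hint i).choose with hRdef
    have hRdiv : ∀ i, a i / b i = (R i : ℝ) := fun i => (hint i).choose_spec.2
    have haR : ∀ i, a i = (R i : ℝ) * b i := by
      intro i
      have hbne : b i ≠ 0 := ne_of_gt (hb i)
      have := hRdiv i
      rw [div_eq_iff hbne] at this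
      rw [this]
    have hR2 : ∀ i, 2 ≤ R i := by
      intro i
      have h1 : (1 : ℝ) < (R i : ℝ) := by
        rw [← hRdiv i]
        exact (one_lt_div (hb i)).2 (hab i)
      have h2 : 1 < R i := by exact_mod_cast h1
      omega
    set own := ownerF X hX with hownd
    have hXb : ∀ i, X i = bundleF own i := fun i => (bundleF_ownerF X hX i).symm
    have hXfun : bundleF own = X := funext fun i => (hXb i).symm
    -- the bridge between real and integer utilities
    have hbridge : ∀ (f : M → Fin n) (i : Fin n),
        util u i (bundleF f i) = b i * ((Wf u a R f i : ℤ) : ℝ) := by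
      intro f i
      have hpt : ∀ gd : M, (if f gd = i then u i gd else 0)
          = b i * (((if f gd = i then wgtF u a R i gd else 0) : ℤ) : ℝ) := by
        intro gd
        by_cases hf : f gd = i
        · rw [if_pos hf, if_pos hf]
          unfold wgtF
          by_cases hL : u i gd = a i
          · rw [if_pos hL, hL, haR i]
            push_cast
            ring
          · rw [if_neg hL]
            have hsb : u i gd = b i := by
              rcases hbi i gd with h | h
              · exact absurd h hL
              · exact h
            rw [hsb]
            push_cast
            ring
        · rw [if_neg hf, if_neg hf]
          push_cast
          ring
      rw [util_bundleF]
      unfold Wf sumIf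
      rw [show ((∑ gd : M, if f gd = i then wgtF u a R i gd else 0 : ℤ) : ℝ)
          = ∑ gd : M, (((if f gd = i then wgtF u a R i gd else 0) : ℤ) : ℝ) from by
        push_cast; rfl]
      rw [Finset.mul_sum]
      exact Finset.sum_congr rfl (fun gd _ => hpt gd)
    have hWiff : ∀ (f f' : M → Fin n) (i : Fin n),
        (util u i (bundleF f i) ≤ util u i (bundleF f' i)) ↔ Wf u a R f i ≤ Wf u a R f' i := by
      intro f f' i
      rw [hbridge f i, hbridge f' i]
      constructor
      · intro h
        have := (mul_le_mul_iff_right₀ (hb i)).1 h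
        exact_mod_cast this
      · intro h
        apply (mul_le_mul_iff_right₀ (hb i)).2
        exact_mod_cast h
    have hWlt : ∀ (f f' : M → Fin n) (i : Fin n),
        (util u i (bundleF f i) < util u i (bundleF f' i)) ↔ Wf u a R f i < Wf u a R f' i := by
      intro f f' i
      rw [hbridge f i, hbridge f' i]
      constructor
      · intro h
        have := (mul_lt_mul_iff_right₀ (hb i)).1 h
        exact_mod_cast this
      · intro h
        apply (mul_lt_mul_iff_right₀ (hb i)).2
        exact_mod_cast h
    set own'0 := ownerF X' hX'alloc with hown0d
    have hX'b : ∀ i, X' i = bundleF own'0 i := fun i => (bundleF_ownerF X' hX'alloc i).symm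
    have hdom0ge : ∀ i, Wf u a R own i ≤ Wf u a R own'0 i := by
      intro i
      apply (hWiff own own'0 i).1
      rw [← hXb i, ← hX'b i]
      exact hX'dom.1 i
    have hdom0st : ∃ j, Wf u a R own j < Wf u a R own'0 j := by
      obtain ⟨j, hj⟩ := hX'dom.2
      refine ⟨j, (hWlt own own'0 j).1 ?_⟩
      rw [← hXb j, ← hX'b j]
      exact hj
    have hPex : ∃ c : ℕ, ∃ ψ : M → Fin n, ((∀ i, Wf u a R own i ≤ Wf u a R ψ i) ∧
        (∃ j, Wf u a R own j < Wf u a R ψ j)) ∧ {gd | own gd ≠ ψ gd}.ncard = c :=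
      ⟨_, own'0, ⟨hdom0ge, hdom0st⟩, rfl⟩
    obtain ⟨ψmin, hψdom, hψcard⟩ := Nat.find_spec hPex
    have hmin : ∀ ψ : M → Fin n, (∀ i, Wf u a R own i ≤ Wf u a R ψ i) →
        (∃ j, Wf u a R own j < Wf u a R ψ j) →
        {gd | own gd ≠ ψmin gd}.ncard ≤ {gd | own gd ≠ ψ gd}.ncard := by
      intro ψ h1 h2
      rw [hψcard]
      exact Nat.find_min' hPex ⟨ψ, ⟨h1, h2⟩, rfl⟩
    have hNoI' : ¬ TypeIWitness u a b (bundleF own) := by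
      rw [hXfun]
      exact hNoI
    have hNoII' : ¬ TypeIIWitness u a b (bundleF own) := by
      rw [hXfun]
      exact hNoII
    exact HSetup.final (own := own) (own' := ψmin)
      ⟨hab, hb, hbi, haR, hR2, hψdom.1, hψdom.2, hmin, hNoI', hNoII'⟩
end

section
/- Let X be an allocation of a personalized bi-valued instance and let X' be a minimal Pareto-improvement of X in which every transferred good is either large for both its giver and its receiver (an LL transfer) or small for both its giver and its receiver (an SS transfer). For each agent i, let L_i^out and L_i^in denote the number of LL transfers in which i is the giver and the receiver respectively, and let S_i^out and S_i^in denote the same for SS transfers. Then for every agent i: (a) S_i^out and S_i^in are not both positive; (b) if S_i^out > 0 then L_i^in > L_i^out; (c) if S_i^in > 0 then L_i^out > L_i^in; and (d) if S_i^out = S_i^in = 0 then L_i^out = L_i^in. -/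
open Finset

/-- Number of LL transfers (large for giver and receiver) from `X` to `X'` with `i` as giver. -/
noncomputable def LLout {n : ℕ} {M : Type*} [DecidableEq M] (u : Fin n → M → ℝ)
    (a : Fin n → ℝ) (X X' : Fin n → Finset M) (i : Fin n) : ℕ :=
  Set.ncard {g : M | g ∈ X i ∧ u i g = a i ∧ ∃ j, j ≠ i ∧ g ∈ X' j ∧ u j g = a j}

/-- Number of LL transfers (large for giver and receiver) from `X` to `X'` with `i` as receiver. -/
noncomputable def LLin {n : ℕ} {M : Type*} [DecidableEq M] (u : Fin n → M → ℝ)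
    (a : Fin n → ℝ) (X X' : Fin n → Finset M) (i : Fin n) : ℕ :=
  Set.ncard {g : M | g ∈ X' i ∧ u i g = a i ∧ ∃ j, j ≠ i ∧ g ∈ X j ∧ u j g = a j}

/-- Number of SS transfers (small for giver and receiver) from `X` to `X'` with `i` as giver. -/
noncomputable def SSout {n : ℕ} {M : Type*} [DecidableEq M] (u : Fin n → M → ℝ)
    (b : Fin n → ℝ) (X X' : Fin n → Finset M) (i : Fin n) : ℕ :=
  Set.ncard {g : M | g ∈ X i ∧ u i g = b i ∧ ∃ j, j ≠ i ∧ g ∈ X' j ∧ u j g = b j}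

/-- Number of SS transfers (small for giver and receiver) from `X` to `X'` with `i` as receiver. -/
noncomputable def SSin {n : ℕ} {M : Type*} [DecidableEq M] (u : Fin n → M → ℝ)
    (b : Fin n → ℝ) (X X' : Fin n → Finset M) (i : Fin n) : ℕ :=
  Set.ncard {g : M | g ∈ X' i ∧ u i g = b i ∧ ∃ j, j ≠ i ∧ g ∈ X j ∧ u j g = b j}


/-- Undoing a single transfer (from `k` to `i`) of a good `h` that agent `i` can afford to
lose contradicts minimality of the Pareto improvement. -/
lemma undo_transfer {n : ℕ} {M : Type*} [Fintype M] [DecidableEq M]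
    (u : Fin n → M → ℝ) (X X' : Fin n → Finset M) (hX : IsAllocation X)
    (hmin : IsMinimalParetoImprovement u X X')
    (i k : Fin n) (h : M) (hik : k ≠ i) (hXk : h ∈ X k) (hX'i : h ∈ X' i)
    (hupos : 0 < u k h)
    (hΔ : util u i (X i) ≤ util u i (X' i) - u i h) : False := by
  obtain ⟨hX'alloc, hdom, hminimal⟩ := hmin
  set X'' : Fin n → Finset M :=
    fun l => if l = k then insert h (X' k) else if l = i then (X' i).erase h else X' l
    with hX''def
  have hikne : i ≠ k := hik.symm
  have hhnotX'k : h ∉ X' k :=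
    fun hc => (Finset.disjoint_left.mp (hX'alloc.2 i k hikne) hX'i) hc
  have hXk'' : X'' k = insert h (X' k) := by simp [hX''def]
  have hXi'' : X'' i = (X' i).erase h := by simp [hX''def, hikne]
  have hXl'' : ∀ l, l ≠ k → l ≠ i → X'' l = X' l := by
    intro l h1 h2; simp [hX''def, h1, h2]
  have hmem : ∀ w : M, ∀ l, w ≠ h → (w ∈ X'' l ↔ w ∈ X' l) := by
    intro w l hw
    simp only [hX''def]
    split_ifs with h1 h2
    · subst h1; simp [Finset.mem_insert, hw]
    · subst h2; simp [Finset.mem_erase, hw]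
    · rfl
  have hmemh : ∀ l, h ∈ X'' l ↔ l = k := by
    intro l
    simp only [hX''def]
    split_ifs with h1 h2
    · simp [h1]
    · subst h2
      simp only [Finset.mem_erase, ne_eq, not_true_eq_false, false_and, false_iff]
      exact h1
    · constructor
      · intro hc
        exact absurd hc (Finset.disjoint_left.mp (hX'alloc.2 i l (fun he => h2 he.symm)) hX'i)
      · intro hc; exact absurd hc h1
  -- X'' is an allocation
  have hX''alloc : IsAllocation X'' := by
    constructor
    · intro w
      by_cases hw : w = h
      · exact ⟨k, by rw [hw, hmemh]⟩
      · obtain ⟨l, hl⟩ := hX'alloc.1 w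
        exact ⟨l, (hmem w l hw).mpr hl⟩
    · intro l m hlm
      rw [Finset.disjoint_left]
      intro w hwl hwm
      by_cases hw : w = h
      · subst hw
        exact hlm (((hmemh l).mp hwl).trans ((hmemh m).mp hwm).symm)
      · exact Finset.disjoint_left.mp (hX'alloc.2 l m hlm) ((hmem w l hw).mp hwl)
          ((hmem w m hw).mp hwm)
  -- utility computations
  have hutil_k : util u k (X'' k) = u k h + util u k (X' k) := by
    rw [hXk'']; exact Finset.sum_insert hhnotX'k
  have hutil_i : util u i (X'' i) = util u i (X' i) - u i h := by
    rw [hXi'']; exact Finset.sum_erase_eq_sub hX'i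
  -- Pareto dominance of X'' over X
  have hdom'' : ParetoDominates u X'' X := by
    constructor
    · intro l
      by_cases h1 : l = k
      · rw [h1, hutil_k]; linarith [hdom.1 k]
      · by_cases h2 : l = i
        · rw [h2, hutil_i]; linarith [hΔ]
        · rw [hXl'' l h1 h2]; exact hdom.1 l
    · exact ⟨k, by rw [hutil_k]; linarith [hdom.1 k]⟩
  -- transfer count decreases
  have hset : {g : M | ∃ l, g ∈ X l ∧ g ∉ X'' l}
      = {g : M | ∃ l, g ∈ X l ∧ g ∉ X' l} \ {h} := by
    ext w
    simp only [Set.mem_setOf_eq, Set.mem_diff, Set.mem_singleton_iff]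
    by_cases hw : w = h
    · subst hw
      constructor
      · rintro ⟨l, hl, hnl⟩
        have hlk : l = k := by
          by_contra hc
          exact Finset.disjoint_left.mp (hX.2 l k hc) hl hXk
        subst hlk
        exact absurd ((hmemh l).mpr rfl) hnl
      · rintro ⟨-, hc⟩; exact absurd rfl hc
    · constructor
      · rintro ⟨l, hl, hnl⟩
        exact ⟨⟨l, hl, fun hc => hnl ((hmem w l hw).mpr hc)⟩, hw⟩
      · rintro ⟨⟨l, hl, hnl⟩, -⟩
        exact ⟨l, hl, fun hc => hnl ((hmem w l hw).mp hc)⟩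
  have hhT : h ∈ {g : M | ∃ l, g ∈ X l ∧ g ∉ X' l} := ⟨k, hXk, fun hc => hhnotX'k hc⟩
  have hlt : transferCount X X'' < transferCount X X' := by
    unfold transferCount
    rw [hset]
    exact Set.ncard_diff_singleton_lt_of_mem hhT (Set.toFinite _)
  have := hminimal X'' hX''alloc hdom''
  omega

/-- Rerouting: if `i` gives away `g` (to `j`) and receives `h` (from `k`), with `u i h = u i g`
and `u j g ≤ u j h`, we can let `i` keep `g` and send `h` to `j` instead, contradicting
minimality. -/
lemma swap_transfer {n : ℕ} {M : Type*} [Fintype M] [DecidableEq M]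
    (u : Fin n → M → ℝ) (X X' : Fin n → Finset M) (hX : IsAllocation X)
    (hmin : IsMinimalParetoImprovement u X X')
    (i j k : Fin n) (g h : M) (hji : j ≠ i) (hki : k ≠ i)
    (hgXi : g ∈ X i) (hgX'j : g ∈ X' j) (hhXk : h ∈ X k) (hhX'i : h ∈ X' i)
    (hiu : u i h = u i g) (hju : u j g ≤ u j h) : False := by
  obtain ⟨hX'alloc, hdom, hminimal⟩ := hmin
  have hij : i ≠ j := hji.symm
  have hgh : g ≠ h := by
    intro he
    exact Finset.disjoint_left.mp (hX.2 i k hki.symm) hgXi (he ▸ hhXk)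
  have hgnX'i : g ∉ X' i := fun hc => Finset.disjoint_left.mp (hX'alloc.2 j i hji) hgX'j hc
  have hhnX'j : h ∉ X' j := fun hc => Finset.disjoint_left.mp (hX'alloc.2 i j hij) hhX'i hc
  have hhnX'k : h ∉ X' k := fun hc => Finset.disjoint_left.mp (hX'alloc.2 i k hki.symm) hhX'i hc
  set X'' : Fin n → Finset M :=
    fun l => if l = i then insert g ((X' i).erase h)
      else if l = j then insert h ((X' j).erase g) else X' l
    with hX''def
  have hXi'' : X'' i = insert g ((X' i).erase h) := by simp [hX''def]
  have hXj'' : X'' j = insert h ((X' j).erase g) := by simp [hX''def, hji]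
  have hXl'' : ∀ l, l ≠ i → l ≠ j → X'' l = X' l := by
    intro l h1 h2; simp [hX''def, h1, h2]
  have hmemg : ∀ l, g ∈ X'' l ↔ l = i := by
    intro l
    simp only [hX''def]
    split_ifs with h1 h2
    · simp [h1]
    · subst h2
      simp [Finset.mem_insert, Finset.mem_erase, hgh, hji]
    · constructor
      · intro hc
        exact absurd hc (Finset.disjoint_left.mp (hX'alloc.2 j l (fun he => h2 he.symm)) hgX'j)
      · intro hc; exact absurd hc h1
  have hmemh : ∀ l, h ∈ X'' l ↔ l = j := by
    intro l
    simp only [hX''def]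
    split_ifs with h1 h2
    · subst h1
      have hhg : h ≠ g := fun e => hgh e.symm
      simp [Finset.mem_insert, Finset.mem_erase, hhg, hij]
    · simp [h2]
    · constructor
      · intro hc
        exact absurd hc (Finset.disjoint_left.mp (hX'alloc.2 i l (fun he => h1 he.symm)) hhX'i)
      · intro hc; exact absurd hc h2
  have hmem : ∀ w : M, ∀ l, w ≠ g → w ≠ h → (w ∈ X'' l ↔ w ∈ X' l) := by
    intro w l hwg hwh
    simp only [hX''def]
    split_ifs with h1 h2
    · subst h1; simp [Finset.mem_insert, Finset.mem_erase, hwg, hwh]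
    · subst h2; simp [Finset.mem_insert, Finset.mem_erase, hwg, hwh]
    · rfl
  -- X'' is an allocation
  have hX''alloc : IsAllocation X'' := by
    constructor
    · intro w
      by_cases hw1 : w = g
      · exact ⟨i, by rw [hw1, hmemg]⟩
      · by_cases hw2 : w = h
        · exact ⟨j, by rw [hw2, hmemh]⟩
        · obtain ⟨l, hl⟩ := hX'alloc.1 w
          exact ⟨l, (hmem w l hw1 hw2).mpr hl⟩
    · intro l m hlm
      rw [Finset.disjoint_left]
      intro w hwl hwm
      by_cases hw1 : w = g
      · subst hw1
        exact hlm (((hmemg l).mp hwl).trans ((hmemg m).mp hwm).symm)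
      · by_cases hw2 : w = h
        · subst hw2
          exact hlm (((hmemh l).mp hwl).trans ((hmemh m).mp hwm).symm)
        · exact Finset.disjoint_left.mp (hX'alloc.2 l m hlm)
            ((hmem w l hw1 hw2).mp hwl) ((hmem w m hw1 hw2).mp hwm)
  -- utility computations
  have hgne : g ∉ (X' i).erase h := fun hc => hgnX'i (Finset.mem_of_mem_erase hc)
  have hhne : h ∉ (X' j).erase g := fun hc => hhnX'j (Finset.mem_of_mem_erase hc)
  have hutil_i : util u i (X'' i) = util u i (X' i) := by
    rw [hXi'']
    unfold util
    rw [Finset.sum_insert hgne, Finset.sum_erase_eq_sub hhX'i, hiu]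
    ring
  have hutil_j : util u j (X' j) ≤ util u j (X'' j) := by
    rw [hXj'']
    unfold util
    rw [Finset.sum_insert hhne, Finset.sum_erase_eq_sub hgX'j]
    linarith
  have hdomptwise : ∀ l, util u l (X' l) ≤ util u l (X'' l) := by
    intro l
    by_cases h1 : l = i
    · rw [h1, hutil_i]
    · by_cases h2 : l = j
      · rw [h2]; exact hutil_j
      · rw [hXl'' l h1 h2]
  have hdom'' : ParetoDominates u X'' X := by
    constructor
    · intro l; exact le_trans (hdom.1 l) (hdomptwise l)
    · obtain ⟨j0, hj0⟩ := hdom.2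
      exact ⟨j0, lt_of_lt_of_le hj0 (hdomptwise j0)⟩
  -- transfer count decreases
  have hgT : g ∈ {w : M | ∃ l, w ∈ X l ∧ w ∉ X' l} := ⟨i, hgXi, hgnX'i⟩
  have hgnT'' : g ∉ {w : M | ∃ l, w ∈ X l ∧ w ∉ X'' l} := by
    rintro ⟨l, hl, hnl⟩
    have hli : l = i := by
      by_contra hc
      exact Finset.disjoint_left.mp (hX.2 l i hc) hl hgXi
    exact hnl ((hmemg l).mpr hli)
  have hsub : {w : M | ∃ l, w ∈ X l ∧ w ∉ X'' l} ⊆ {w : M | ∃ l, w ∈ X l ∧ w ∉ X' l} := by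
    rintro w ⟨l, hl, hnl⟩
    by_cases hw1 : w = g
    · exact absurd ⟨l, hl, hnl⟩ (hw1 ▸ hgnT'')
    · by_cases hw2 : w = h
      · subst hw2
        have hlk : l = k := by
          by_contra hc
          exact Finset.disjoint_left.mp (hX.2 l k hc) hl hhXk
        exact ⟨l, hl, hlk ▸ hhnX'k⟩
      · exact ⟨l, hl, fun hc => hnl ((hmem w l hw1 hw2).mpr hc)⟩
  have hlt : transferCount X X'' < transferCount X X' := by
    unfold transferCount
    refine Set.ncard_lt_ncard ?_ (Set.toFinite _)
    exact (Set.ssubset_iff_of_subset hsub).mpr ⟨g, hgT, hgnT''⟩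
  have := hminimal X'' hX''alloc hdom''
  omega

/-- The change in utility of agent `i` is precisely determined by the LL/SS transfer counts. -/
lemma key_counts {n : ℕ} {M : Type*} [Fintype M] [DecidableEq M]
    (u : Fin n → M → ℝ) (a b : Fin n → ℝ) (hab : ∀ i, b i < a i)
    (hbi : ∀ i g, u i g = a i ∨ u i g = b i)
    (X X' : Fin n → Finset M) (hX : IsAllocation X) (hX' : IsAllocation X')
    (hLLSS : ∀ (i j : Fin n) (g : M), i ≠ j → g ∈ X i → g ∈ X' j →
      (u i g = a i ∧ u j g = a j) ∨ (u i g = b i ∧ u j g = b j)) (i : Fin n) :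
    util u i (X' i) - util u i (X i) =
      a i * (LLin u a X X' i : ℝ) + b i * (SSin u b X X' i : ℝ)
        - a i * (LLout u a X X' i : ℝ) - b i * (SSout u b X X' i : ℝ) := by
  classical
  have hne : b i ≠ a i := (hab i).ne
  -- identify the four counts with cards of filters of the two difference sets
  have hLout : LLout u a X X' i = ((X i \ X' i).filter (fun g => u i g = a i)).card := by
    rw [← Set.ncard_coe_finset]
    unfold LLout
    congr 1
    ext g
    simp only [Finset.coe_filter, Finset.mem_sdiff, Set.mem_setOf_eq]
    constructor
    · rintro ⟨h1, h2, j, hj, h3, -⟩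
      exact ⟨⟨h1, fun hc => Finset.disjoint_left.mp (hX'.2 j i hj) h3 hc⟩, h2⟩
    · rintro ⟨⟨h1, h2⟩, h3⟩
      obtain ⟨j, hj⟩ := hX'.1 g
      have hji : j ≠ i := fun he => h2 (he ▸ hj)
      rcases hLLSS i j g hji.symm h1 hj with ⟨-, h5⟩ | ⟨h4, -⟩
      · exact ⟨h1, h3, j, hji, hj, h5⟩
      · exact absurd (h3.symm.trans h4) hne.symm
  have hSout : SSout u b X X' i = ((X i \ X' i).filter (fun g => u i g = b i)).card := by
    rw [← Set.ncard_coe_finset]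
    unfold SSout
    congr 1
    ext g
    simp only [Finset.coe_filter, Finset.mem_sdiff, Set.mem_setOf_eq]
    constructor
    · rintro ⟨h1, h2, j, hj, h3, -⟩
      exact ⟨⟨h1, fun hc => Finset.disjoint_left.mp (hX'.2 j i hj) h3 hc⟩, h2⟩
    · rintro ⟨⟨h1, h2⟩, h3⟩
      obtain ⟨j, hj⟩ := hX'.1 g
      have hji : j ≠ i := fun he => h2 (he ▸ hj)
      rcases hLLSS i j g hji.symm h1 hj with ⟨h4, -⟩ | ⟨-, h5⟩
      · exact absurd (h3.symm.trans h4) hne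
      · exact ⟨h1, h3, j, hji, hj, h5⟩
  have hLin : LLin u a X X' i = ((X' i \ X i).filter (fun g => u i g = a i)).card := by
    rw [← Set.ncard_coe_finset]
    unfold LLin
    congr 1
    ext g
    simp only [Finset.coe_filter, Finset.mem_sdiff, Set.mem_setOf_eq]
    constructor
    · rintro ⟨h1, h2, j, hj, h3, -⟩
      exact ⟨⟨h1, fun hc => Finset.disjoint_left.mp (hX.2 j i hj) h3 hc⟩, h2⟩
    · rintro ⟨⟨h1, h2⟩, h3⟩
      obtain ⟨j, hj⟩ := hX.1 g
      have hji : j ≠ i := fun he => h2 (he ▸ hj)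
      rcases hLLSS j i g hji hj h1 with ⟨h5, -⟩ | ⟨-, h4⟩
      · exact ⟨h1, h3, j, hji, hj, h5⟩
      · exact absurd (h3.symm.trans h4) hne.symm
  have hSin : SSin u b X X' i = ((X' i \ X i).filter (fun g => u i g = b i)).card := by
    rw [← Set.ncard_coe_finset]
    unfold SSin
    congr 1
    ext g
    simp only [Finset.coe_filter, Finset.mem_sdiff, Set.mem_setOf_eq]
    constructor
    · rintro ⟨h1, h2, j, hj, h3, -⟩
      exact ⟨⟨h1, fun hc => Finset.disjoint_left.mp (hX.2 j i hj) h3 hc⟩, h2⟩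
    · rintro ⟨⟨h1, h2⟩, h3⟩
      obtain ⟨j, hj⟩ := hX.1 g
      have hji : j ≠ i := fun he => h2 (he ▸ hj)
      rcases hLLSS j i g hji hj h1 with ⟨-, h4⟩ | ⟨h5, -⟩
      · exact absurd (h3.symm.trans h4) hne
      · exact ⟨h1, h3, j, hji, hj, h5⟩
  -- value of a difference set as a combination of the two filters
  have hval : ∀ S : Finset M,
      util u i S = a i * ((S.filter (fun g => u i g = a i)).card : ℝ)
        + b i * ((S.filter (fun g => u i g = b i)).card : ℝ) := by
    intro S
    unfold util
    rw [← Finset.sum_filter_add_sum_filter_not S (fun g => u i g = a i) (u i)]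
    have h1 : ∑ g ∈ S.filter (fun g => u i g = a i), u i g
        = a i * ((S.filter (fun g => u i g = a i)).card : ℝ) := by
      rw [Finset.sum_congr rfl (fun g hg => (Finset.mem_filter.mp hg).2),
        Finset.sum_const, nsmul_eq_mul, mul_comm]
    have heq : S.filter (fun g => ¬ u i g = a i) = S.filter (fun g => u i g = b i) := by
      apply Finset.filter_congr
      intro g _
      constructor
      · intro hc; exact (hbi i g).resolve_left hc
      · intro hc hc2; exact hne (hc.symm.trans hc2)
    have h2 : ∑ g ∈ S.filter (fun g => ¬ u i g = a i), u i g
        = b i * ((S.filter (fun g => u i g = b i)).card : ℝ) := by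
      rw [heq, Finset.sum_congr rfl (fun g hg => (Finset.mem_filter.mp hg).2),
        Finset.sum_const, nsmul_eq_mul, mul_comm]
    rw [h1, h2]
  -- difference of utilities equals difference over the two symmetric difference parts
  have hsplit : util u i (X' i) - util u i (X i)
      = util u i (X' i \ X i) - util u i (X i \ X' i) := by
    unfold util
    have h1 := Finset.sum_inter_add_sum_sdiff (X' i) (X i) (u i)
    have h2 := Finset.sum_inter_add_sum_sdiff (X i) (X' i) (u i)
    rw [Finset.inter_comm] at h2
    linarith
  rw [hsplit, hval (X' i \ X i), hval (X i \ X' i), hLout, hSout, hLin, hSin]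
  ring

/-- Let `X'` be a minimal Pareto-improvement of `X` in which every transferred
good is either large for both its giver and receiver (LL) or small for both (SS).  Then for
every agent `i`: (a) `i` does not both give and receive small goods; (b) if `i` gives small
goods then she is a net large-item receiver; (c) if `i` receives small goods then she is a
net large-item giver; (d) if `i` neither gives nor receives small goods then she gives away
exactly as many large goods as she receives. -/
theorem min_pareto_improvement_agent_classification
    (n : ℕ) (M : Type*) [Fintype M] [DecidableEq M]
    (u : Fin n → M → ℝ) (a b : Fin n → ℝ)
    (hab : ∀ i, b i < a i) (hb : ∀ i, 0 < b i)
    (hbi : ∀ i g, u i g = a i ∨ u i g = b i)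
    (X X' : Fin n → Finset M) (hX : IsAllocation X)
    (hmin : IsMinimalParetoImprovement u X X')
    (hLLSS : ∀ (i j : Fin n) (g : M), i ≠ j → g ∈ X i → g ∈ X' j →
      (u i g = a i ∧ u j g = a j) ∨ (u i g = b i ∧ u j g = b j)) :
    ∀ i : Fin n,
      (¬ (0 < SSout u b X X' i ∧ 0 < SSin u b X X' i)) ∧
      (0 < SSout u b X X' i → LLout u a X X' i < LLin u a X X' i) ∧
      (0 < SSin u b X X' i → LLin u a X X' i < LLout u a X X' i) ∧
      (SSout u b X X' i = 0 → SSin u b X X' i = 0 →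
        LLout u a X X' i = LLin u a X X' i) := by
  intro i
  have ha : 0 < a i := lt_trans (hb i) (hab i)
  have hupos : ∀ k g, 0 < u k g := by
    intro k g
    rcases hbi k g with hc | hc <;> rw [hc]
    · exact lt_trans (hb k) (hab k)
    · exact hb k
  have hkey := key_counts u a b hab hbi X X' hX hmin.1 hLLSS i
  have hΔ0 : 0 ≤ util u i (X' i) - util u i (X i) := by linarith [hmin.2.1.1 i]
  -- witness extraction
  have hSout_wit : 0 < SSout u b X X' i →
      ∃ g j, g ∈ X i ∧ u i g = b i ∧ j ≠ i ∧ g ∈ X' j ∧ u j g = b j := by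
    intro hpos
    obtain ⟨g, hg1, hg2, j, hj1, hj2, hj3⟩ :=
      Set.nonempty_of_ncard_ne_zero
        (s := {g : M | g ∈ X i ∧ u i g = b i ∧ ∃ j, j ≠ i ∧ g ∈ X' j ∧ u j g = b j})
        (by unfold SSout at hpos; omega)
    exact ⟨g, j, hg1, hg2, hj1, hj2, hj3⟩
  have hSin_wit : 0 < SSin u b X X' i →
      ∃ h k, h ∈ X' i ∧ u i h = b i ∧ k ≠ i ∧ h ∈ X k ∧ u k h = b k := by
    intro hpos
    obtain ⟨h, hh1, hh2, k, hk1, hk2, hk3⟩ :=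
      Set.nonempty_of_ncard_ne_zero
        (s := {g : M | g ∈ X' i ∧ u i g = b i ∧ ∃ j, j ≠ i ∧ g ∈ X j ∧ u j g = b j})
        (by unfold SSin at hpos; omega)
    exact ⟨h, k, hh1, hh2, hk1, hk2, hk3⟩
  have hLin_wit : 0 < LLin u a X X' i →
      ∃ h k, h ∈ X' i ∧ u i h = a i ∧ k ≠ i ∧ h ∈ X k ∧ u k h = a k := by
    intro hpos
    obtain ⟨h, hh1, hh2, k, hk1, hk2, hk3⟩ :=
      Set.nonempty_of_ncard_ne_zero
        (s := {g : M | g ∈ X' i ∧ u i g = a i ∧ ∃ j, j ≠ i ∧ g ∈ X j ∧ u j g = a j})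
        (by unfold LLin at hpos; omega)
    exact ⟨h, k, hh1, hh2, hk1, hk2, hk3⟩
  -- part (a)
  have hA : ¬ (0 < SSout u b X X' i ∧ 0 < SSin u b X X' i) := by
    rintro ⟨h1, h2⟩
    obtain ⟨g, j, hg1, hg2, hj1, hj2, hj3⟩ := hSout_wit h1
    obtain ⟨h, k, hh1, hh2, hk1, hk2, hk3⟩ := hSin_wit h2
    refine swap_transfer u X X' hX hmin i j k g h hj1 hk1 hg1 hj2 hk2 hh1
      (hh2.trans hg2.symm) ?_
    rcases hbi j h with hc | hc
    · rw [hc, hj3]; exact (hab j).le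
    · rw [hc, hj3]
  refine ⟨hA, ?_, ?_, ?_⟩
  -- part (b)
  · intro hSo
    have hSi : SSin u b X X' i = 0 := by
      by_contra hc
      exact hA ⟨hSo, Nat.pos_of_ne_zero hc⟩
    have hSiR : (SSin u b X X' i : ℝ) = 0 := by rw [hSi]; norm_cast
    have hSoR : (1 : ℝ) ≤ (SSout u b X X' i : ℝ) := by exact_mod_cast hSo
    have hlt : (LLout u a X X' i : ℝ) < (LLin u a X X' i : ℝ) := by
      have hbpos : 0 < b i * (SSout u b X X' i : ℝ) := by nlinarith [hb i]
      have hz : b i * (SSin u b X X' i : ℝ) = 0 := by rw [hSiR, mul_zero]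
      have : a i * (LLout u a X X' i : ℝ) < a i * (LLin u a X X' i : ℝ) := by linarith
      exact (mul_lt_mul_iff_right₀ ha).mp this
    exact_mod_cast hlt
  -- part (c)
  · intro hSi
    have hSo : SSout u b X X' i = 0 := by
      by_contra hc
      exact hA ⟨Nat.pos_of_ne_zero hc, hSi⟩
    by_contra hc
    have hle : LLout u a X X' i ≤ LLin u a X X' i := Nat.le_of_not_lt hc
    have hleR : (LLout u a X X' i : ℝ) ≤ (LLin u a X X' i : ℝ) := by exact_mod_cast hle
    obtain ⟨h, k, hh1, hh2, hk1, hk2, hk3⟩ := hSin_wit hSi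
    refine undo_transfer u X X' hX hmin i k h hk1 hk2 hh1 (hupos k h) ?_
    have hSoR : (SSout u b X X' i : ℝ) = 0 := by rw [hSo]; norm_cast
    have hSiR : (1 : ℝ) ≤ (SSin u b X X' i : ℝ) := by exact_mod_cast hSi
    have h1 : a i * (LLout u a X X' i : ℝ) ≤ a i * (LLin u a X X' i : ℝ) :=
      mul_le_mul_of_nonneg_left hleR ha.le
    have h2 : b i * 1 ≤ b i * (SSin u b X X' i : ℝ) :=
      mul_le_mul_of_nonneg_left hSiR (hb i).le
    have hz : b i * (SSout u b X X' i : ℝ) = 0 := by rw [hSoR, mul_zero]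
    rw [hh2]
    linarith
  -- part (d)
  · intro hSo hSi
    have hSoR : (SSout u b X X' i : ℝ) = 0 := by rw [hSo]; norm_cast
    have hSiR : (SSin u b X X' i : ℝ) = 0 := by rw [hSi]; norm_cast
    have hz1 : b i * (SSin u b X X' i : ℝ) = 0 := by rw [hSiR, mul_zero]
    have hz2 : b i * (SSout u b X X' i : ℝ) = 0 := by rw [hSoR, mul_zero]
    have hle : LLout u a X X' i ≤ LLin u a X X' i := by
      have : a i * (LLout u a X X' i : ℝ) ≤ a i * (LLin u a X X' i : ℝ) := by linarith
      exact_mod_cast (mul_le_mul_iff_right₀ ha).mp this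
    rcases Nat.lt_or_ge (LLout u a X X' i) (LLin u a X X' i) with hlt | hge
    · exfalso
      have hLinpos : 0 < LLin u a X X' i := Nat.lt_of_le_of_lt (Nat.zero_le _) hlt
      obtain ⟨h, k, hh1, hh2, hk1, hk2, hk3⟩ := hLin_wit hLinpos
      refine undo_transfer u X X' hX hmin i k h hk1 hk2 hh1 (hupos k h) ?_
      have hltR : (LLout u a X X' i : ℝ) + 1 ≤ (LLin u a X X' i : ℝ) := by exact_mod_cast hlt
      have h1 : a i * ((LLout u a X X' i : ℝ) + 1) ≤ a i * (LLin u a X X' i : ℝ) :=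
        mul_le_mul_of_nonneg_left hltR ha.le
      rw [hh2]
      linarith
    · exact le_antisymm hle hge
end
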